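/- arXiv:0910.4515 — 8 statements merged into one kernel-verified Lean document; each statement's English description precedes it below -/
import Mathlib

section
/- The matrices A_D, for D ranging over P(n,p), form a basis of 𝒜 as a complex vector space; in particular, the dimension of 𝒜 over ℂ equals the binomial coefficient C(n + p² − 1, p² − 1). -/
open scoped Classical

noncomputable section

/-- `D(a,b) ∈ ℕ^{p×p}`: `D(a,b)_{i,j}` counts positions `k` with `a_k = i` and `b_k = j`. -/
def Dmat {n p : ℕ} (a b : Fin n → Fin p) : Matrix (Fin p) (Fin p) ℕ :=
  Matrix.of fun i j => (Finset.univ.filter fun k => a k = i ∧ b k = j).card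

/-- The 0/1 matrix `A_D` with `(A_D)_{a,b} = 1` iff `D(a,b) = D`. -/
def AD (n p : ℕ) (D : Matrix (Fin p) (Fin p) ℕ) :
    Matrix (Fin n → Fin p) (Fin n → Fin p) ℂ :=
  Matrix.of fun a b => if Dmat a b = D then 1 else 0

/-- The algebra `𝒜` of `S_n`-invariant matrices, as a complex subspace of the matrix space:
`M_{σa, σb} = M_{a,b}` for all `σ ∈ S_n` (here `(σa)_i = a_{σ⁻¹ i}`). -/
def invAlg (n p : ℕ) : Submodule ℂ (Matrix (Fin n → Fin p) (Fin n → Fin p) ℂ) where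
  carrier := {M | ∀ σ : Equiv.Perm (Fin n), ∀ a b : Fin n → Fin p,
    M (fun i => a (σ⁻¹ i)) (fun i => b (σ⁻¹ i)) = M a b}
  add_mem' := by
    intro x y hx hy σ a b
    simp only [Matrix.add_apply, hx σ a b, hy σ a b]
  zero_mem' := by
    intro σ a b
    rfl
  smul_mem' := by
    intro c x hx σ a b
    simp only [Matrix.smul_apply, hx σ a b]

namespace Stmt0Aux

variable {n p : ℕ}

lemma Dmat_apply_eq (a b : Fin n → Fin p) (i j : Fin p) :
    Dmat a b i j = (Finset.univ.filter fun k => (a k, b k) = (i, j)).card := by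
  simp [Dmat, Prod.ext_iff]

lemma Dmat_sum (a b : Fin n → Fin p) : ∑ i, ∑ j, Dmat a b i j = n := by
  have h : ∑ y : Fin p × Fin p,
      (Finset.univ.filter fun k => (a k, b k) = y).card = n := by
    rw [← Finset.card_eq_sum_card_fiberwise
      (f := fun k => (a k, b k)) (t := Finset.univ) (fun x _ => Finset.mem_univ _)]
    simp
  rw [Fintype.sum_prod_type] at h
  simp only [Dmat_apply_eq]
  exact h

lemma Dmat_perm (σ : Equiv.Perm (Fin n)) (a b : Fin n → Fin p) :
    Dmat (fun i => a (σ⁻¹ i)) (fun i => b (σ⁻¹ i)) = Dmat a b := by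
  ext i j
  simp only [Dmat, Matrix.of_apply]
  refine Finset.card_bij' (fun k _ => σ⁻¹ k) (fun k _ => σ k) ?_ ?_ ?_ ?_ <;>
    intro k hk <;>
    simp only [Finset.mem_filter, Finset.mem_univ, true_and,
      Equiv.Perm.inv_def, Equiv.symm_apply_apply, Equiv.apply_symm_apply] at hk ⊢ <;>
    first
      | exact hk
      | simp [hk]
      | rfl

lemma AD_mem (D : Matrix (Fin p) (Fin p) ℕ) : AD n p D ∈ invAlg n p := by
  intro σ a b
  simp only [AD, Matrix.of_apply, Dmat_perm]

/-- Same joint type implies the two pairs are related by a permutation. -/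
lemma exists_perm {a b a' b' : Fin n → Fin p} (h : Dmat a b = Dmat a' b') :
    ∃ σ : Equiv.Perm (Fin n),
      a' = (fun i => a (σ⁻¹ i)) ∧ b' = (fun i => b (σ⁻¹ i)) := by
  set f : Fin n → Fin p × Fin p := fun k => (a k, b k) with hf
  set g : Fin n → Fin p × Fin p := fun k => (a' k, b' k) with hg
  have hc : ∀ y, Fintype.card {k // f k = y} = Fintype.card {k // g k = y} := by
    intro y
    have h2 : Dmat a b y.1 y.2 = Dmat a' b' y.1 y.2 := by rw [h]
    rw [Dmat_apply_eq, Dmat_apply_eq] at h2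
    rw [Fintype.card_subtype, Fintype.card_subtype]
    simpa [hf, hg] using h2
  let e : ∀ y, {k // f k = y} ≃ {k // g k = y} := fun y => Fintype.equivOfCardEq (hc y)
  let τ : Fin n ≃ Fin n := Equiv.ofFiberEquiv e
  have hτ : ∀ x, g (τ x) = f x := Equiv.ofFiberEquiv_map e
  have key : ∀ i, g i = f (τ.symm i) := by
    intro i
    have := hτ (τ.symm i)
    rwa [Equiv.apply_symm_apply] at this
  refine ⟨τ, funext fun i => ?_, funext fun i => ?_⟩
  · exact congrArg Prod.fst (key i)
  · exact congrArg Prod.snd (key i)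

lemma count_map_univ {N : ℕ} {α : Type*} (F : Fin N → α) (y : α) :
    Multiset.count y (Multiset.map F Finset.univ.val)
      = (Finset.univ.filter fun k => F k = y).card := by
  rw [Multiset.count_map]
  simp [Finset.card, Finset.filter, eq_comm]

/-- Every admissible `D` is realized as a joint type. -/
lemma exists_word (D : Matrix (Fin p) (Fin p) ℕ) (hD : ∑ i, ∑ j, D i j = n) :
    ∃ a b : Fin n → Fin p, Dmat a b = D := by
  set m : Multiset (Fin p × Fin p) :=
    Finsupp.toMultiset (Finsupp.equivFunOnFinite.symm fun y : Fin p × Fin p => D y.1 y.2)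
    with hm
  have hcount : ∀ y : Fin p × Fin p, m.count y = D y.1 y.2 := by
    intro y
    rw [hm, Finsupp.count_toMultiset]
    simp
  have hcard : Multiset.card m = n := by
    rw [← Multiset.sum_count_eq_card (s := Finset.univ) (fun a _ => Finset.mem_univ a)]
    rw [← hD, Fintype.sum_prod_type]
    simp only [hcount]
  obtain ⟨l, hl⟩ : ∃ l : List (Fin p × Fin p), m = ↑l := ⟨m.toList, (Multiset.coe_toList m).symm⟩
  have hlen : l.length = n := by
    rw [hl] at hcard
    simpa using hcard
  subst hlen
  refine ⟨fun k => (l.get k).1, fun k => (l.get k).2, ?_⟩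
  have huniv : (Finset.univ.val : Multiset (Fin l.length))
      = ↑(List.finRange l.length) := by
    rw [Fin.univ_def]
  have hmap : Multiset.map l.get Finset.univ.val = m := by
    rw [hl, huniv, Multiset.map_coe, List.map_get_finRange]
  ext i j
  rw [Dmat_apply_eq]
  simp only [Prod.mk.eta]
  have h5 := count_map_univ l.get (i, j)
  rw [hmap] at h5
  refine Eq.trans ?_ (hcount (i, j))
  convert h5.symm using 3

lemma index_finite :
    Finite {D : Matrix (Fin p) (Fin p) ℕ // ∑ i, ∑ j, D i j = n} := by
  have hbd : ∀ (D : {D : Matrix (Fin p) (Fin p) ℕ // ∑ i, ∑ j, D i j = n})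
      (i j : Fin p), D.1 i j < n + 1 := by
    intro D i j
    have h1 : D.1 i j ≤ ∑ j', D.1 i j' :=
      Finset.single_le_sum (f := fun j' => D.1 i j') (fun _ _ => Nat.zero_le _)
        (Finset.mem_univ j)
    have h2 : (∑ j', D.1 i j') ≤ ∑ i', ∑ j', D.1 i' j' :=
      Finset.single_le_sum (f := fun i' => ∑ j', D.1 i' j') (fun _ _ => Nat.zero_le _)
        (Finset.mem_univ i)
    have := D.2
    omega
  apply Finite.of_injective
    (fun D : {D : Matrix (Fin p) (Fin p) ℕ // ∑ i, ∑ j, D i j = n} =>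
      fun i j => (⟨D.1 i j, hbd D i j⟩ : Fin (n + 1)))
  intro D E hDE
  ext i j
  have := congrFun (congrFun hDE i) j
  simpa [Fin.mk.injEq] using this

end Stmt0Aux

open Stmt0Aux in
/-- the matrices `A_D`, `D ∈ P(n,p)`, form a basis of `𝒜` over `ℂ`, and
`dim 𝒜 = C(n + p² - 1, p² - 1)`. -/
theorem stmt_0 (n p : ℕ) (hn : 1 ≤ n) (hp : 1 ≤ p) :
    (∃ B : Module.Basis {D : Matrix (Fin p) (Fin p) ℕ // ∑ i, ∑ j, D i j = n} ℂ (invAlg n p),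
        ∀ D, (B D : Matrix (Fin n → Fin p) (Fin n → Fin p) ℂ) = AD n p D.1) ∧
      Module.finrank ℂ (invAlg n p) = (n + p ^ 2 - 1).choose (p ^ 2 - 1) := by
  set ι := {D : Matrix (Fin p) (Fin p) ℕ // ∑ i, ∑ j, D i j = n} with hι
  haveI : Finite ι := index_finite
  haveI : Fintype ι := Fintype.ofFinite ι
  set v : ι → invAlg n p := fun D => ⟨AD n p D.1, AD_mem D.1⟩ with hv
  -- linear independence
  have li' : LinearIndependent ℂ (fun D : ι => AD n p D.1) := by
    rw [Fintype.linearIndependent_iff]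
    intro g hg D0
    obtain ⟨a, b, hab⟩ := exists_word D0.1 D0.2
    have h1 := congrFun (congrFun hg a) b
    simp only [Matrix.sum_apply, Matrix.smul_apply, AD, Matrix.of_apply, Matrix.zero_apply,
      smul_eq_mul, mul_ite, mul_one, mul_zero, hab] at h1
    have h2 : ∀ D : ι, (if D0.1 = D.1 then g D else 0) = (if D = D0 then g D else 0) := by
      intro D
      by_cases hD : D = D0
      · subst hD; simp
      · rw [if_neg hD, if_neg (fun hc => hD (Subtype.ext hc.symm))]
    rw [Finset.sum_congr rfl (fun D _ => h2 D), Finset.sum_ite_eq' Finset.univ D0 g] at h1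
    simpa using h1
  have li : LinearIndependent ℂ v :=
    LinearIndependent.of_comp (invAlg n p).subtype li'
  -- spanning
  have hsp : ⊤ ≤ Submodule.span ℂ (Set.range v) := by
    intro x _
    choose wa wb hw using fun D : ι => exists_word D.1 D.2
    set c : ι → ℂ := fun D => (x : Matrix (Fin n → Fin p) (Fin n → Fin p) ℂ) (wa D) (wb D)
      with hc
    have hxe : (x : Matrix (Fin n → Fin p) (Fin n → Fin p) ℂ)
        = ∑ D : ι, c D • AD n p D.1 := by
      funext a b
      set D0 : ι := ⟨Dmat a b, Dmat_sum a b⟩ with hD0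
      have h2 : ∀ D : ι, (if Dmat a b = D.1 then c D else 0)
          = (if D = D0 then c D else 0) := by
        intro D
        by_cases hD : D = D0
        · subst hD; simp [hD0]
        · rw [if_neg (fun hc' => hD (Subtype.ext hc'.symm)), if_neg hD]
      have h3 : (∑ D : ι, c D • AD n p D.1) a b = c D0 := by
        simp only [Matrix.sum_apply, Matrix.smul_apply, AD, Matrix.of_apply, smul_eq_mul,
          mul_ite, mul_one, mul_zero]
        rw [Finset.sum_congr rfl (fun D _ => h2 D), Finset.sum_ite_eq' Finset.univ D0 c]
        simp
      rw [h3]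
      have heq : Dmat a b = Dmat (wa D0) (wb D0) := (hw D0).symm
      obtain ⟨σ, ha', hb'⟩ := exists_perm heq
      have hx2 := x.2 σ a b
      have hfin : c D0 = (x : Matrix (Fin n → Fin p) (Fin n → Fin p) ℂ) a b := by
        show (x : Matrix (Fin n → Fin p) (Fin n → Fin p) ℂ) (wa D0) (wb D0) = _
        rw [ha', hb']
        exact hx2
      exact hfin.symm
    have hxv : x = ∑ D : ι, c D • v D := by
      apply Subtype.ext
      rw [hxe]
      push_cast
      rfl
    rw [hxv]
    exact Submodule.sum_mem _ fun D _ =>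
      Submodule.smul_mem _ _ (Submodule.subset_span ⟨D, rfl⟩)
  set B : Module.Basis ι ℂ (invAlg n p) := Module.Basis.mk li hsp with hB
  have hBD : ∀ D, (B D : Matrix (Fin n → Fin p) (Fin n → Fin p) ℂ) = AD n p D.1 := by
    intro D
    rw [hB, Module.Basis.mk_apply]
  constructor
  · exact ⟨B, hBD⟩
  · rw [Module.finrank_eq_card_basis B]
    -- count the index type
    let e0 : Matrix (Fin p) (Fin p) ℕ ≃ Multiset (Fin p × Fin p) :=
      (Equiv.curry (Fin p) (Fin p) ℕ).symm.trans
        (Finsupp.equivFunOnFinite.symm.trans Multiset.toFinsupp.symm.toEquiv)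
    have hcount : ∀ (D : Matrix (Fin p) (Fin p) ℕ) (y : Fin p × Fin p),
        (e0 D).count y = D y.1 y.2 := by
      intro D y
      show ((Multiset.toFinsupp.symm.toEquiv)
        (Finsupp.equivFunOnFinite.symm fun y : Fin p × Fin p => D y.1 y.2)).count y = _
      have : ∀ (f : (Fin p × Fin p) →₀ ℕ) (y),
          (Multiset.toFinsupp.symm.toEquiv f).count y = f y := by
        intro f y
        have h := Multiset.toFinsupp_apply (Multiset.toFinsupp.symm.toEquiv f) y
        rw [show (Multiset.toFinsupp (Multiset.toFinsupp.symm.toEquiv f)) = f from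
          Multiset.toFinsupp.apply_symm_apply f] at h
        exact h.symm
      rw [this]
      simp
    have e1 : ι ≃ Sym (Fin p × Fin p) n := by
      refine Equiv.subtypeEquiv e0 fun D => ?_
      show (∑ i, ∑ j, D i j = n) ↔ Multiset.card (e0 D) = n
      rw [← Multiset.sum_count_eq_card (s := Finset.univ) (fun a _ => Finset.mem_univ a)]
      rw [Fintype.sum_prod_type]
      simp only [hcount]
    rw [Fintype.card_congr e1, Sym.card_sym_eq_choose]
    have hcardα : Fintype.card (Fin p × Fin p) = p ^ 2 := by simp [sq]
    rw [hcardα]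
    have hp2 : 1 ≤ p ^ 2 := Nat.one_le_pow _ _ hp
    rw [show p ^ 2 + n - 1 = n + p ^ 2 - 1 by omega]
    rw [← Nat.choose_symm (by omega : n ≤ n + p ^ 2 - 1)]
    congr 1
    omega
end
end

section
/- For all L, M, N ∈ P(n,p) and all words a, c ∈ [p]^n with D(a,c) = N, the (a,c) entry of the matrix product A_L·A_M equals c_{L,M}^N := Σ_B ∏_{r,t=1}^{p} (N_{r,t})!/(B_{r,1,t}!·B_{r,2,t}!···B_{r,p,t}!), where the sum runs over all three-dimensional arrays B ∈ ℕ^{p×p×p} satisfying Σ_k B_{r,s,k} = L_{r,s}, Σ_k B_{k,s,t} = M_{s,t} and Σ_k B_{r,k,t} = N_{r,t} for all r,s,t ∈ [p]. Consequently A_L·A_M = Σ_{N∈P(n,p)} c_{L,M}^N A_N. -/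
open scoped Classical

noncomputable section

/-- The structure constants `c_{L,M}^N = Σ_B ∏_{r,t} N_{r,t}!/(B_{r,1,t}!⋯B_{r,p,t}!)`,
where `B` runs over all `B ∈ ℕ^{p×p×p}` with `Σ_k B_{r,s,k} = L_{r,s}`,
`Σ_k B_{k,s,t} = M_{s,t}` and `Σ_k B_{r,k,t} = N_{r,t}`.  (Since all feasible `B`
have entries at most `n`, the entries are encoded in `Fin (n+1)`.) -/
def cLMN (n p : ℕ) (L M N : Matrix (Fin p) (Fin p) ℕ) : ℕ :=
  ∑ B ∈ (Finset.univ : Finset (Fin p → Fin p → Fin p → Fin (n + 1))).filter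
      (fun B => (∀ r s, ∑ k, (B r s k : ℕ) = L r s) ∧
        (∀ s t, ∑ k, (B k s t : ℕ) = M s t) ∧
        (∀ r t, ∑ k, (B r k t : ℕ) = N r t)),
    ∏ r, ∏ t, Nat.multinomial Finset.univ (fun s => (B r s t : ℕ))

open Finset in
lemma H1 {α : Type*} [Fintype α] (P : α → Prop) [Fintype {x // P x}]
    (q : {x // P x} → Prop) :
    (univ.filter q).card = (univ.filter fun x : α => ∃ h : P x, q ⟨x, h⟩).card := by
  classical
  refine Finset.card_bij (fun x _ => (x : α)) ?_ ?_ ?_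
  · intro x hx
    simp only [mem_filter, mem_univ, true_and] at hx ⊢
    exact ⟨x.2, by simpa using hx⟩
  · intro x _ y _ h; exact Subtype.ext h
  · intro x hx
    simp only [mem_filter, mem_univ, true_and] at hx
    obtain ⟨h, hq⟩ := hx
    exact ⟨⟨x, h⟩, by simpa using hq, rfl⟩

open Finset in
lemma fibA {α β : Type*} [Fintype α] [DecidableEq β] (P : α → Prop) [Fintype {x // P x}]
    (g : α → β) (j : β)
    (him : ∀ x, g x = j → P x) :
    (univ.filter fun x : {x // P x} => g (x : α) = j).card
      = (univ.filter fun x : α => g x = j).card := by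
  refine Finset.card_bij (fun x _ => (x : α)) ?_ ?_ ?_
  · intro x hx; simp only [mem_filter, mem_univ, true_and] at hx ⊢; exact hx
  · intro x _ y _ hxy; exact Subtype.ext hxy
  · intro x hx
    simp only [mem_filter, mem_univ, true_and] at hx
    exact ⟨⟨x, him x hx⟩, by simpa using hx, rfl⟩

open Finset in
lemma fibB {α β : Type*} [Fintype α] [DecidableEq β] (P : α → Prop) [DecidablePred P] [Fintype {x // P x}]
    (h : {x // P x} → β) (aa j : β) (hja : j ≠ aa) :
    (univ.filter fun x : α => (if hx : P x then h ⟨x, hx⟩ else aa) = j).card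
      = (univ.filter fun y : {x // P x} => h y = j).card := by
  have hP : ∀ x : α, (if hx : P x then h ⟨x, hx⟩ else aa) = j → P x := by
    intro x hx
    by_cases hp : P x
    · exact hp
    · rw [dif_neg hp] at hx; exact absurd hx.symm hja
  refine Finset.card_bij
    (fun x hx => (⟨x, hP x (by simpa using hx)⟩ : {x // P x})) ?_ ?_ ?_
  · intro x hx
    simp only [mem_filter, mem_univ, true_and] at hx ⊢
    have hp := hP x hx
    rwa [dif_pos hp] at hx
  · intro x _ y _ hxy; simpa using congrArg Subtype.val hxy
  · intro y hy
    simp only [mem_filter, mem_univ, true_and] at hy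
    refine ⟨(y : α), ?_, Subtype.ext rfl⟩
    simp only [mem_filter, mem_univ, true_and]
    rw [dif_pos y.2]
    simpa using hy

open Finset in
lemma countA {β : Type} [Fintype β] [DecidableEq β] (t : Finset β) :
    ∀ (α : Type) [Fintype α] [DecidableEq α] (B : β → ℕ),
      (∑ j ∈ t, B j) = Fintype.card α →
      (Finset.univ.filter (fun g : α → β =>
        (∀ j ∈ t, (Finset.univ.filter fun x => g x = j).card = B j) ∧ ∀ x, g x ∈ t)).card
        = Nat.multinomial t B := by
  classical
  induction t using Finset.induction_on with
  | empty =>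
    intro α _ _ B hB
    simp only [Finset.sum_empty] at hB
    haveI : IsEmpty α := Fintype.card_eq_zero_iff.mp hB.symm
    have heq : (Finset.univ.filter (fun g : α → β =>
        (∀ j ∈ (∅ : Finset β), (Finset.univ.filter fun x => g x = j).card = B j) ∧
          ∀ x, g x ∈ (∅ : Finset β))) = univ := by
      refine Finset.filter_true_of_mem fun g _ =>
        ⟨fun j hj => absurd hj (by simp), fun x => (IsEmpty.false x).elim⟩
    rw [heq, Finset.card_univ, Nat.multinomial_empty]
    simp
  | @insert a s ha ih =>
    intro α _ _ B hB
    rw [Finset.sum_insert ha] at hB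
    rw [Finset.card_eq_sum_card_fiberwise
      (f := fun g : α → β => Finset.univ.filter fun x => g x = a)
      (t := Finset.univ.powersetCard (B a)) ?_]
    swap
    · intro g hg
      simp only [mem_coe, mem_filter, mem_univ, true_and] at hg
      rw [Finset.mem_coe, Finset.mem_powersetCard]
      exact ⟨Finset.subset_univ _, hg.1 a (Finset.mem_insert_self a s)⟩
    have key : ∀ S ∈ Finset.univ.powersetCard (B a),
        ((Finset.univ.filter (fun g : α → β =>
          (∀ j ∈ insert a s, (Finset.univ.filter fun x => g x = j).card = B j) ∧
            ∀ x, g x ∈ insert a s)).filter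
          (fun g => (Finset.univ.filter fun x => g x = a) = S)).card
        = Nat.multinomial s B := by
      intro S hS
      rw [Finset.mem_powersetCard] at hS
      have hcard : (∑ j ∈ s, B j) = Fintype.card {x : α // x ∉ S} := by
        have h1 : Fintype.card {x : α // x ∈ S} = B a := by
          simpa using hS.2
        have h2 : Fintype.card {x : α // x ∉ S} =
            Fintype.card α - Fintype.card {x : α // x ∈ S} :=
          Fintype.card_subtype_compl _
        omega
      rw [← ih {x : α // x ∉ S} B hcard]
      refine Finset.card_bij' (fun g _ => fun x : {x : α // x ∉ S} => g (x : α))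
        (fun h _ => fun x : α => if hx : x ∉ S then h ⟨x, hx⟩ else a) ?_ ?_ ?_ ?_
      · -- forward membership
        intro g hg
        simp only [mem_filter, mem_univ, true_and] at hg ⊢
        obtain ⟨⟨hcnt, hmem⟩, hfib⟩ := hg
        have hSg : ∀ x : α, x ∈ S ↔ g x = a := by
          intro x; rw [← hfib]; simp
        constructor
        · intro j hj
          have hja : j ≠ a := fun hc => ha (hc ▸ hj)
          refine Eq.trans (fibA (fun x : α => x ∉ S) g j fun x hgx hxS => ?_)
            (hcnt j (Finset.mem_insert_of_mem hj))
          exact hja (hgx.symm.trans ((hSg x).mp hxS))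
        · intro x
          rcases Finset.mem_insert.mp (hmem (x : α)) with h | h
          · exact absurd ((hSg _).mpr h) x.2
          · exact h
      · -- backward membership
        intro hfun hh
        simp only [mem_filter, mem_univ, true_and] at hh ⊢
        obtain ⟨hcnt, hmem⟩ := hh
        have hfib : (univ.filter fun x : α =>
            (if hx : x ∉ S then hfun ⟨x, hx⟩ else a) = a) = S := by
          ext x
          simp only [mem_filter, mem_univ, true_and]
          by_cases hx : x ∈ S
          · simp [hx]
          · simp only [hx, not_false_iff, dif_pos, iff_false]
            intro hc
            exact ha (hc ▸ hmem ⟨x, hx⟩)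
        refine ⟨⟨?_, ?_⟩, hfib⟩
        · intro j hj
          rcases Finset.mem_insert.mp hj with h1 | h1
          · subst h1; rw [hfib]; exact hS.2
          · have hja : j ≠ a := fun hc => ha (hc ▸ h1)
            exact Eq.trans (fibB (fun x : α => x ∉ S) hfun a j hja) (hcnt j h1)
        · intro x
          by_cases hx : x ∈ S
          · simp [hx]
          · simp only [hx, not_false_iff, dif_pos]
            exact Finset.mem_insert_of_mem (hmem ⟨x, hx⟩)
      · -- left inverse
        intro g hg
        simp only [mem_filter, mem_univ, true_and] at hg
        funext x
        by_cases hx : x ∈ S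
        · simp only [hx, not_true, dif_neg, not_false_iff]
          have hx' : x ∈ univ.filter fun y => g y = a := by rw [hg.2]; exact hx
          exact ((Finset.mem_filter.mp hx').2).symm
        · simp [hx]
      · -- right inverse
        intro h _
        funext x
        simp [x.2]
    rw [Finset.sum_congr rfl key, Finset.sum_const, Finset.card_powersetCard,
      Finset.card_univ, Nat.multinomial_insert ha, smul_eq_mul, ← hB]

open Finset in
lemma cardCongr' {α : Type*} [Fintype α] (p q : α → Prop) {ip : DecidablePred p}
    {iq : DecidablePred q} (h : ∀ x, p x ↔ q x) :
    (@Finset.filter α p ip univ).card = (@Finset.filter α q iq univ).card := by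
  congr 1; ext x; simp only [mem_filter, mem_univ, true_and, h x]

open Finset in
lemma cardCongr {α : Type*} [Fintype α] (p q : α → Prop) [DecidablePred p] [DecidablePred q]
    (h : ∀ x, p x ↔ q x) : (univ.filter p).card = (univ.filter q).card := by
  congr 1; ext x; simp only [mem_filter, mem_univ, true_and, h x]

open Finset in
lemma sum_card_filter_fiber {α γ : Type*} [Fintype α] [Fintype γ]
    (P : α → Prop) (f : α → γ) :
    ∑ t, (univ.filter fun x => P x ∧ f x = t).card = (univ.filter P).card := by
  classical
  rw [Finset.card_eq_sum_card_fiberwise (f := f) (t := univ) (fun x _ => mem_univ _)]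
  refine Finset.sum_congr rfl fun t _ => ?_
  rw [Finset.filter_filter]

open Finset in
lemma fibC {α : Type*} [Fintype α] (P : α → Prop) [DecidablePred P] [Fintype {x // P x}]
    (q : α → Prop) [DecidablePred q] :
    (univ.filter fun x : {x // P x} => q (x : α)).card
      = (univ.filter fun x : α => P x ∧ q x).card := by
  refine Finset.card_bij (fun x _ => (x : α)) ?_ ?_ ?_
  · intro x hx
    simp only [mem_filter, mem_univ, true_and] at hx ⊢
    exact ⟨x.2, hx⟩
  · intro x _ y _ hxy; exact Subtype.ext hxy
  · intro x hx
    simp only [mem_filter, mem_univ, true_and] at hx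
    exact ⟨⟨x, hx.1⟩, by simpa using hx.2, rfl⟩

open Finset in
lemma evalEq {α ι β : Type} (π : α → ι)
    (g : ∀ i : ι, {x // π x = i} → β) (i : ι) (x : {x // π x = i}) :
    g (π (x : α)) ⟨(x : α), rfl⟩ = g i x := by
  obtain ⟨x, hx⟩ := x
  subst hx
  rfl

open Finset in
lemma countC {α ι β : Type} [Fintype α] [DecidableEq α] [Fintype ι] [DecidableEq ι]
    [Fintype β] [DecidableEq β] (π : α → ι) (B : ι → β → ℕ)
    (hB : ∀ i, ∑ j, B i j = (Finset.univ.filter fun x => π x = i).card)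
    {ipred : DecidablePred (fun b : α → β =>
      ∀ i j, (Finset.univ.filter fun x => π x = i ∧ b x = j).card = B i j)} :
    (@Finset.filter _ (fun b : α → β =>
        ∀ i j, (Finset.univ.filter fun x => π x = i ∧ b x = j).card = B i j) ipred
        Finset.univ).card
      = ∏ i, Nat.multinomial Finset.univ (B i) := by
  rw [Finset.filter_congr_decidable]
  have hGi : ∀ i : ι,
      (Finset.univ.filter fun g : {x // π x = i} → β =>
        ∀ j, (Finset.univ.filter fun x => g x = j).card = B i j).card
      = Nat.multinomial Finset.univ (B i) := by
    intro i
    have hc : (∑ j, B i j) = Fintype.card {x // π x = i} := by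
      rw [hB i, Fintype.card_subtype]
    rw [← countA Finset.univ {x // π x = i} (B i) hc]
    refine cardCongr _ _ fun g => ?_
    simp
  rw [← Finset.prod_congr rfl fun i _ => hGi i, ← Fintype.card_piFinset]
  refine Finset.card_bij'
    (fun b _ => fun i (x : {x // π x = i}) => b (x : α))
    (fun g _ => fun x : α => g (π x) ⟨x, rfl⟩) ?_ ?_ ?_ ?_
  · intro b hb
    simp only [mem_filter, mem_univ, true_and] at hb
    rw [Fintype.mem_piFinset]
    intro i
    simp only [mem_filter, mem_univ, true_and]
    intro j
    exact Eq.trans (fibC (fun x : α => π x = i) (fun x => b x = j)) (hb i j)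
  · intro g hg
    rw [Fintype.mem_piFinset] at hg
    simp only [mem_filter, mem_univ, true_and] at hg ⊢
    intro i j
    refine Eq.trans (fibC (fun x : α => π x = i)
      (fun x => g (π x) ⟨x, rfl⟩ = j)).symm ?_
    refine Eq.trans (cardCongr _ (fun x : {x // π x = i} => g i x = j)
      fun x => by rw [evalEq π g i x]) ?_
    exact hg i j
  · intro b _; rfl
  · intro g _
    funext i x
    exact evalEq π g i x

open Finset in
set_option maxHeartbeats 1000000 in
lemma entryNat (n p : ℕ) (L M N : Matrix (Fin p) (Fin p) ℕ) (a c : Fin n → Fin p)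
    (h : Dmat a c = N) :
    (Finset.univ.filter fun b : Fin n → Fin p => Dmat a b = L ∧ Dmat b c = M).card
      = cLMN n p L M N := by
  classical
  have hbound : ∀ (b : Fin n → Fin p) (r s t : Fin p),
      (Finset.univ.filter fun k => a k = r ∧ b k = s ∧ c k = t).card < n + 1 :=
    fun b r s t => Nat.lt_succ_of_le
      (by simpa using Finset.card_filter_le (univ : Finset (Fin n)) _)
  set enc : (Fin n → Fin p) → (Fin p → Fin p → Fin p → Fin (n + 1)) :=
    fun b r s t => ⟨(Finset.univ.filter fun k => a k = r ∧ b k = s ∧ c k = t).card,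
      hbound b r s t⟩ with henc
  have hval : ∀ b r s t, ((enc b r s t : Fin (n+1)) : ℕ)
      = (Finset.univ.filter fun k => a k = r ∧ b k = s ∧ c k = t).card := fun _ _ _ _ => rfl
  have hsumL : ∀ (b : Fin n → Fin p) (r s : Fin p),
      ∑ t, (Finset.univ.filter fun k => a k = r ∧ b k = s ∧ c k = t).card = Dmat a b r s := by
    intro b r s
    refine Eq.trans (Finset.sum_congr rfl fun t _ => cardCongr' _ _ fun k => by tauto)
      (Eq.trans (sum_card_filter_fiber (fun k => a k = r ∧ b k = s) c)
        (cardCongr' _ _ fun k => Iff.rfl))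
  have hsumM : ∀ (b : Fin n → Fin p) (s t : Fin p),
      ∑ r, (Finset.univ.filter fun k => a k = r ∧ b k = s ∧ c k = t).card = Dmat b c s t := by
    intro b s t
    refine Eq.trans (Finset.sum_congr rfl fun r _ => cardCongr' _ _ fun k => by tauto)
      (Eq.trans (sum_card_filter_fiber (fun k => b k = s ∧ c k = t) a)
        (cardCongr' _ _ fun k => Iff.rfl))
  have hsumN : ∀ (b : Fin n → Fin p) (r t : Fin p),
      ∑ s, (Finset.univ.filter fun k => a k = r ∧ b k = s ∧ c k = t).card = Dmat a c r t := by
    intro b r t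
    refine Eq.trans (Finset.sum_congr rfl fun s _ => cardCongr' _ _ fun k => by tauto)
      (Eq.trans (sum_card_filter_fiber (fun k => a k = r ∧ c k = t) b)
        (cardCongr' _ _ fun k => Iff.rfl))
  rw [cLMN]
  rw [Finset.card_eq_sum_card_fiberwise (f := enc)
    (t := (Finset.univ : Finset (Fin p → Fin p → Fin p → Fin (n + 1))).filter
      (fun B => (∀ r s, ∑ k, (B r s k : ℕ) = L r s) ∧
        (∀ s t, ∑ k, (B k s t : ℕ) = M s t) ∧
        (∀ r t, ∑ k, (B r k t : ℕ) = N r t))) ?_]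
  swap
  · intro b hb
    simp only [mem_coe, mem_filter, mem_univ, true_and] at hb ⊢
    refine ⟨fun r s => ?_, fun s t => ?_, fun r t => ?_⟩
    · rw [Finset.sum_congr rfl fun t _ => hval b r s t, hsumL b r s, hb.1]
    · rw [Finset.sum_congr rfl fun r _ => hval b r s t, hsumM b s t, hb.2]
    · rw [Finset.sum_congr rfl fun s _ => hval b r s t, hsumN b r t, h]
  refine Finset.sum_congr rfl fun B hB => ?_
  rw [Finset.mem_filter] at hB
  obtain ⟨-, hL', hM', hN'⟩ := hB
  -- drop the Dmat conditions: they follow from enc b = B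
  have hDrop : ((Finset.univ.filter fun b : Fin n → Fin p =>
      Dmat a b = L ∧ Dmat b c = M).filter fun b => enc b = B).card
      = (Finset.univ.filter fun b : Fin n → Fin p => enc b = B).card := by
    rw [Finset.filter_filter]
    refine cardCongr' _ _ fun b => ?_
    constructor
    · exact fun hx => hx.2
    · intro hE
      have hv : ∀ r s t, (Finset.univ.filter fun k => a k = r ∧ b k = s ∧ c k = t).card
          = ((B r s t : Fin (n+1)) : ℕ) := by
        intro r s t; rw [← hE]
      refine ⟨⟨?_, ?_⟩, hE⟩
      · ext r s
        rw [← hL' r s, ← hsumL b r s]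
        exact Finset.sum_congr rfl fun t _ => hv r s t
      · ext s t
        rw [← hM' s t, ← hsumM b s t]
        exact Finset.sum_congr rfl fun r _ => hv r s t
  rw [hDrop]
  -- now count via the partition by (a k, c k)
  have hpre : ∀ (b : Fin n → Fin p), enc b = B ↔
      ∀ (i : Fin p × Fin p) (j : Fin p),
        (Finset.univ.filter fun x => (a x, c x) = i ∧ b x = j).card = (B i.1 j i.2 : ℕ) := by
    intro b
    constructor
    · intro hE i j
      have hv : (Finset.univ.filter fun k => a k = i.1 ∧ b k = j ∧ c k = i.2).card
          = ((B i.1 j i.2 : Fin (n+1)) : ℕ) := by rw [← hE]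
      rw [← hv]
      refine cardCongr' _ _ fun x => ?_
      cases i
      simp only [Prod.mk.injEq]
      tauto
    · intro hAll
      funext r s t
      refine Fin.ext ?_
      rw [hval b r s t, ← hAll (r, t) s]
      refine cardCongr' _ _ fun x => ?_
      simp only [Prod.mk.injEq]
      tauto
  refine Eq.trans (b := (Finset.univ.filter fun b : Fin n → Fin p =>
      ∀ (i : Fin p × Fin p) (j : Fin p),
        (Finset.univ.filter fun x => (a x, c x) = i ∧ b x = j).card = (B i.1 j i.2 : ℕ)).card)
    (cardCongr' _ _ hpre) ?_
  refine Eq.trans (countC (fun k : Fin n => (a k, c k)) (fun i j => (B i.1 j i.2 : ℕ)) ?_) ?_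
  · intro i
    refine Eq.trans (hN' i.1 i.2) ?_
    have h2 : N i.1 i.2 = Dmat a c i.1 i.2 := by rw [h]
    refine Eq.trans h2 ?_
    show (Finset.univ.filter fun k => a k = i.1 ∧ c k = i.2).card = _
    refine cardCongr' _ _ fun x => ?_
    cases i
    simp [Prod.ext_iff]
  · exact (Fintype.prod_prod_type _).trans rfl

open Finset in
lemma entryC (n p : ℕ) (L M N : Matrix (Fin p) (Fin p) ℕ) (a c : Fin n → Fin p)
    (h : Dmat a c = N) :
    (AD n p L * AD n p M) a c = (cLMN n p L M N : ℂ) := by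
  rw [Matrix.mul_apply]
  have hterm : ∀ b, AD n p L a b * AD n p M b c
      = if Dmat a b = L ∧ Dmat b c = M then (1 : ℂ) else 0 := by
    intro b
    simp only [AD, Matrix.of_apply]
    by_cases h1 : Dmat a b = L <;> by_cases h2 : Dmat b c = M <;> simp [h1, h2]
  rw [Finset.sum_congr rfl fun b _ => hterm b, Finset.sum_boole,
    entryNat n p L M N a c h]

open Finset in
lemma dsum (n p : ℕ) (a c : Fin n → Fin p) : ∑ i, ∑ j, Dmat a c i j = n := by
  classical
  have h1 : ∀ i, ∑ j, Dmat a c i j = (univ.filter fun k => a k = i).card := by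
    intro i
    calc ∑ j, Dmat a c i j
        = ∑ j, ((univ.filter fun k : Fin n => a k = i).filter fun k => c k = j).card := by
          refine Finset.sum_congr rfl fun j _ => ?_
          rw [Finset.filter_filter]
          show (Finset.univ.filter fun k : Fin n => a k = i ∧ c k = j).card = _
          exact cardCongr' _ _ fun k => Iff.rfl
      _ = (univ.filter fun k : Fin n => a k = i).card :=
          (Finset.card_eq_sum_card_fiberwise (f := c) (t := (univ : Finset (Fin p)))
            (fun x _ => mem_univ _)).symm
  rw [Finset.sum_congr rfl fun i _ => h1 i]
  have h2 := Finset.card_eq_sum_card_fiberwise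
    (s := (univ : Finset (Fin n))) (f := a) (t := univ) (fun x _ => mem_univ _)
  simpa using h2.symm

/-- for `L, M, N ∈ P(n,p)` and words `a, c` with `D(a,c) = N`, the `(a,c)` entry
of `A_L · A_M` equals `c_{L,M}^N`; consequently `A_L · A_M = Σ_N c_{L,M}^N A_N`. -/
theorem stmt_2 (n p : ℕ) (hn : 1 ≤ n) (hp : 1 ≤ p)
    (L M N : Matrix (Fin p) (Fin p) ℕ)
    (hL : ∑ i, ∑ j, L i j = n) (hM : ∑ i, ∑ j, M i j = n) (hN : ∑ i, ∑ j, N i j = n) :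
    (∀ a c : Fin n → Fin p, Dmat a c = N →
        (AD n p L * AD n p M) a c = (cLMN n p L M N : ℂ)) ∧
      AD n p L * AD n p M =
        ∑ N' ∈ (Finset.univ : Finset (Fin p → Fin p → Fin (n + 1))).filter
            (fun N' => ∑ i, ∑ j, (N' i j : ℕ) = n),
          (cLMN n p L M (Matrix.of fun i j => (N' i j : ℕ)) : ℂ) •
            AD n p (Matrix.of fun i j => (N' i j : ℕ)) := by
  have hb : ∀ (a c : Fin n → Fin p) (i j : Fin p), Dmat a c i j < n + 1 := by
    intro a c i j
    show (Finset.univ.filter fun k => a k = i ∧ c k = j).card < n + 1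
    have h1 : (Finset.univ.filter fun k => a k = i ∧ c k = j).card
        ≤ (Finset.univ : Finset (Fin n)).card := Finset.card_filter_le _ _
    simp only [Finset.card_univ, Fintype.card_fin] at h1
    omega
  refine ⟨fun a c h => entryC n p L M N a c h, ?_⟩
  ext a c
  set encN : Fin p → Fin p → Fin (n + 1) := fun i j => ⟨Dmat a c i j, hb a c i j⟩ with hencN
  have hof : (Matrix.of fun i j => ((encN i j : Fin (n + 1)) : ℕ)) = Dmat a c := by
    ext i j; rfl
  rw [Matrix.sum_apply]
  rw [Finset.sum_eq_single encN ?_ ?_]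
  · rw [Matrix.smul_apply, hof]
    have : AD n p (Dmat a c) a c = 1 := by
      simp [AD]
    rw [this, smul_eq_mul, mul_one]
    exact entryC n p L M (Dmat a c) a c rfl
  · intro D hD hne
    have : AD n p (Matrix.of fun i j => ((D i j : Fin (n + 1)) : ℕ)) a c = 0 := by
      simp only [AD, Matrix.of_apply]
      rw [if_neg]
      intro hc
      apply hne
      funext i j
      refine Fin.ext ?_
      have := congrFun (congrFun hc i) j
      simp only [Matrix.of_apply] at this
      exact this.symm
    rw [Matrix.smul_apply, this, smul_zero]
  · intro habs
    exfalso
    apply habs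
    simp only [Finset.mem_filter, Finset.mem_univ, true_and]
    exact dsum n p a c
end
end

section
/- The map ψ : End_G(V) → ⊕_{λ=1}^{k} ℂ^{B_λ×B_λ} defined by ψ(A) := ⊕_{λ=1}^{k} (⟨Ab, b'⟩)_{b,b'∈B_λ} is a bijective ℂ-algebra homomorphism which moreover satisfies ψ(A*) = ψ(A)*, where A* is the adjoint of A with respect to the inner product and on each block * is the conjugate transpose. -/
open scoped Classical
set_option linter.unusedSectionVars false
set_option linter.unusedVariables false
set_option maxHeartbeats 1000000

noncomputable section

variable {G V : Type*}

/-- A linear endomorphism is `G`-equivariant (a `G`-homomorphism) w.r.t. the action `ρ`. -/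
def IsEquivariant [Group G] [AddCommGroup V] [Module ℂ V]
    (ρ : G →* (V →ₗ[ℂ] V)) (A : V →ₗ[ℂ] V) : Prop :=
  ∀ g v, A (ρ g v) = ρ g (A v)

/-- A subspace is a `G`-submodule: it is invariant under the action `ρ`. -/
def IsGSubmodule [Group G] [AddCommGroup V] [Module ℂ V]
    (ρ : G →* (V →ₗ[ℂ] V)) (U : Submodule ℂ V) : Prop :=
  ∀ g, ∀ x ∈ U, ρ g x ∈ U

/-- A `G`-submodule is irreducible: it is nonzero and has no proper nonzero `G`-submodules. -/
def IsGIrreducible [Group G] [AddCommGroup V] [Module ℂ V]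
    (ρ : G →* (V →ₗ[ℂ] V)) (U : Submodule ℂ V) : Prop :=
  U ≠ ⊥ ∧ ∀ W : Submodule ℂ V, IsGSubmodule ρ W → W ≤ U → W = ⊥ ∨ W = U

/-- Two `G`-submodules are isomorphic as `G`-modules: some equivariant linear map of `V`
restricts to a bijection between them. -/
def GIso [Group G] [AddCommGroup V] [Module ℂ V]
    (ρ : G →* (V →ₗ[ℂ] V)) (U₁ U₂ : Submodule ℂ V) : Prop :=
  ∃ f : V →ₗ[ℂ] V, IsEquivariant ρ f ∧ Set.BijOn f U₁ U₂

section Helpers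
open scoped InnerProductSpace
open Submodule

variable [Group G] [NormedAddCommGroup V] [InnerProductSpace ℂ V] [FiniteDimensional ℂ V]
variable (ρ : G →* (V →ₗ[ℂ] V))

lemma rho_inv_left (g : G) (x : V) : ρ g⁻¹ (ρ g x) = x := by
  have : ρ (g⁻¹ * g) x = ρ g⁻¹ (ρ g x) := by rw [map_mul]; rfl
  simpa using this.symm

lemma rho_inv_right (g : G) (x : V) : ρ g (ρ g⁻¹ x) = x := by
  simpa using rho_inv_left ρ g⁻¹ x

variable (hunit : ∀ g x y, (inner ℂ (ρ g x) (ρ g y) : ℂ) = inner ℂ x y)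

include hunit in
lemma inner_rho_right (g : G) (x y : V) : ⟪x, ρ g y⟫_ℂ = ⟪ρ g⁻¹ x, y⟫_ℂ := by
  rw [← hunit g⁻¹ x (ρ g y), rho_inv_left]

include hunit in
lemma inner_rho_left (g : G) (x y : V) : ⟪ρ g x, y⟫_ℂ = ⟪x, ρ g⁻¹ y⟫_ℂ := by
  rw [← hunit g⁻¹ (ρ g x) y, rho_inv_left]

lemma IsEquivariant.comp' {A B : V →ₗ[ℂ] V} (hA : IsEquivariant ρ A)
    (hB : IsEquivariant ρ B) : IsEquivariant ρ (A ∘ₗ B) := fun g v => by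
  simp [LinearMap.comp_apply, hB g v, hA g (B v)]

lemma isEquivariant_one : IsEquivariant ρ 1 := fun g v => rfl

lemma isEquivariant_zero : IsEquivariant ρ 0 := fun g v => by simp

lemma IsEquivariant.smul' {A : V →ₗ[ℂ] V} (c : ℂ) (hA : IsEquivariant ρ A) :
    IsEquivariant ρ (c • A) := fun g v => by simp [hA g v]

lemma IsEquivariant.sub' {A B : V →ₗ[ℂ] V} (hA : IsEquivariant ρ A)
    (hB : IsEquivariant ρ B) : IsEquivariant ρ (A - B) := fun g v => by
  simp [hA g v, hB g v]

lemma isEquivariant_sum {α : Type*} (s : Finset α) (f : α → (V →ₗ[ℂ] V))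
    (h : ∀ a ∈ s, IsEquivariant ρ (f a)) : IsEquivariant ρ (∑ a ∈ s, f a) := by
  intro g v
  rw [LinearMap.sum_apply, LinearMap.sum_apply, map_sum]
  exact Finset.sum_congr rfl fun a ha => h a ha g v

include hunit in
lemma isEquivariant_adjoint {A : V →ₗ[ℂ] V} (hA : IsEquivariant ρ A) :
    IsEquivariant ρ (LinearMap.adjoint A) := by
  intro g v
  apply ext_inner_left ℂ
  intro w
  rw [LinearMap.adjoint_inner_right, inner_rho_right ρ hunit,
    inner_rho_right ρ hunit, ← hA g⁻¹ w, LinearMap.adjoint_inner_right]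

lemma isGSubmodule_ker {A : V →ₗ[ℂ] V} (hA : IsEquivariant ρ A) :
    IsGSubmodule ρ (LinearMap.ker A) := by
  intro g x hx
  rw [LinearMap.mem_ker] at hx ⊢
  rw [hA g x, hx, map_zero]

include hunit in
lemma isGSubmodule_orthogonal {U : Submodule ℂ V} (hU : IsGSubmodule ρ U) :
    IsGSubmodule ρ Uᗮ := by
  intro g x hx
  rw [Submodule.mem_orthogonal] at hx ⊢
  intro u hu
  rw [inner_rho_right ρ hunit]
  exact hx _ (hU g⁻¹ u hu)

/-- Orthogonal projection onto `U` as an endomorphism of `V`. -/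
def projL (U : Submodule ℂ V) : V →ₗ[ℂ] V :=
  U.subtype ∘ₗ (orthogonalProjection U).toLinearMap

lemma projL_mem (U : Submodule ℂ V) (v : V) : projL U v ∈ U := (orthogonalProjection U v).2

lemma projL_eq_self {U : Submodule ℂ V} {v : V} (hv : v ∈ U) : projL U v = v :=
  Submodule.starProjection_eq_self_iff.2 hv

lemma projL_inner (U : Submodule ℂ V) (x y : V) : ⟪projL U x, y⟫_ℂ = ⟪x, projL U y⟫_ℂ :=
  Submodule.inner_starProjection_left_eq_right U x y

include hunit in
lemma projL_equivariant {U : Submodule ℂ V} (hU : IsGSubmodule ρ U) :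
    IsEquivariant ρ (projL U) := by
  intro g v
  have h1 : ρ g (projL U v) ∈ U := hU g _ (projL_mem U v)
  have h3 : v - projL U v ∈ Uᗮ := Submodule.sub_starProjection_mem_orthogonal v
  have h4 : ρ g v - ρ g (projL U v) ∈ Uᗮ := by
    rw [← map_sub]
    exact isGSubmodule_orthogonal ρ hunit hU g _ h3
  exact Submodule.eq_starProjection_of_mem_orthogonal h1 h4

/-- The `G`-submodule generated by the orbit of a vector. -/
def orbitSpan (x : V) : Submodule ℂ V := span ℂ (Set.range fun g => ρ g x)

lemma orbitSpan_isGSubmodule (x : V) : IsGSubmodule ρ (orbitSpan ρ x) := by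
  intro g y hy
  induction hy using span_induction with
  | mem z hz =>
      obtain ⟨h, rfl⟩ := hz
      apply subset_span
      exact ⟨g * h, by simp only [map_mul]; rfl⟩
  | zero => simp
  | add a b _ _ ha hb => rw [map_add]; exact add_mem ha hb
  | smul c a _ ha => rw [map_smul]; exact smul_mem _ _ ha

lemma mem_orbitSpan_self (x : V) : x ∈ orbitSpan ρ x :=
  subset_span ⟨1, by simp⟩

lemma orbitSpan_le {U : Submodule ℂ V} (hUs : IsGSubmodule ρ U) {x : V} (hx : x ∈ U) :
    orbitSpan ρ x ≤ U := by
  rw [orbitSpan, span_le]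
  rintro _ ⟨g, rfl⟩
  exact hUs g x hx

lemma orbitSpan_eq_of_irreducible {U : Submodule ℂ V} (hU : IsGIrreducible ρ U)
    (hUs : IsGSubmodule ρ U) {x : V} (hx : x ∈ U) (hx0 : x ≠ 0) :
    orbitSpan ρ x = U := by
  rcases hU.2 (orbitSpan ρ x) (orbitSpan_isGSubmodule ρ x) (orbitSpan_le ρ hUs hx) with h | h
  · exact absurd (h ▸ mem_orbitSpan_self ρ x) (by simpa using hx0)
  · exact h

lemma irreducible_le_of_mem {W U : Submodule ℂ V} (hW : IsGSubmodule ρ W)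
    (hU : IsGIrreducible ρ U) (hUs : IsGSubmodule ρ U) {x : V}
    (hx : x ∈ U) (hx0 : x ≠ 0) (hxW : x ∈ W) : U ≤ W := by
  rw [← orbitSpan_eq_of_irreducible ρ hU hUs hx hx0]
  exact orbitSpan_le ρ hW hxW

/-- Schur's lemma, homomorphism version. -/
lemma schur_hom {A : V →ₗ[ℂ] V} (hA : IsEquivariant ρ A) {U₁ U₂ : Submodule ℂ V}
    (hU₁ : IsGIrreducible ρ U₁) (hU₁s : IsGSubmodule ρ U₁) (hU₂ : IsGIrreducible ρ U₂)
    (hmaps : ∀ x ∈ U₁, A x ∈ U₂) :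
    (∀ x ∈ U₁, A x = 0) ∨ Set.BijOn A U₁ U₂ := by
  set K := U₁ ⊓ LinearMap.ker A with hKdef
  have hK : IsGSubmodule ρ K := fun g x hx =>
    ⟨hU₁s g x hx.1, isGSubmodule_ker ρ hA g x hx.2⟩
  rcases hU₁.2 K hK inf_le_left with hb | ht
  · right
    have hinj : Set.InjOn A U₁ := by
      intro x hx y hy hxy
      have hmem : x - y ∈ K := ⟨sub_mem hx hy, by
        simp [LinearMap.mem_ker, map_sub, hxy]⟩
      rw [hb] at hmem
      simpa [sub_eq_zero] using hmem
    set I := U₁.map A with hIdef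
    have hI : IsGSubmodule ρ I := by
      rintro g _ ⟨x, hx, rfl⟩
      exact ⟨ρ g x, hU₁s g x hx, hA g x⟩
    have hIle : I ≤ U₂ := by rintro _ ⟨x, hx, rfl⟩; exact hmaps x hx
    have hIne : I ≠ ⊥ := by
      obtain ⟨x, hxU, hx0⟩ := Submodule.exists_mem_ne_zero_of_ne_bot hU₁.1
      intro hI0
      have : A x = 0 := by
        have : A x ∈ I := ⟨x, hxU, rfl⟩
        rw [hI0] at this
        simpa using this
      have : x ∈ K := ⟨hxU, this⟩
      rw [hb] at this
      exact hx0 (by simpa using this)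
    rcases hU₂.2 I hI hIle with h | h
    · exact absurd h hIne
    · refine ⟨fun x hx => hmaps x hx, hinj, fun y hy => ?_⟩
      rw [← h] at hy
      obtain ⟨x, hx, rfl⟩ := hy
      exact ⟨x, hx, rfl⟩
  · left
    intro x hx
    have : x ∈ K := ht ▸ hx
    exact this.2

/-- Schur's lemma, endomorphism version. -/
lemma schur_endo {A : V →ₗ[ℂ] V} (hA : IsEquivariant ρ A) {U : Submodule ℂ V}
    (hU : IsGIrreducible ρ U) (hUs : IsGSubmodule ρ U)
    (hmaps : ∀ x ∈ U, A x ∈ U) : ∃ c : ℂ, ∀ x ∈ U, A x = c • x := by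
  haveI : Nontrivial ↥U := Submodule.nontrivial_iff_ne_bot.2 hU.1
  set A' : ↥U →ₗ[ℂ] ↥U := A.restrict hmaps with hA'def
  obtain ⟨c, hc⟩ := Module.End.exists_eigenvalue A'
  obtain ⟨v, hv⟩ := hc.exists_hasEigenvector
  refine ⟨c, ?_⟩
  set B := A - c • (1 : V →ₗ[ℂ] V) with hBdef
  have hB : IsEquivariant ρ B := hA.sub' ρ ((isEquivariant_one ρ).smul' ρ c)
  set K := U ⊓ LinearMap.ker B with hKdef
  have hK : IsGSubmodule ρ K := fun g x hx =>
    ⟨hUs g x hx.1, isGSubmodule_ker ρ hB g x hx.2⟩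
  have hvK : (v : V) ∈ K := by
    refine ⟨v.2, ?_⟩
    show (v:V) ∈ LinearMap.ker B
    rw [LinearMap.mem_ker]
    have hAv : A (v : V) = c • (v : V) := by
      have := hv.apply_eq_smul
      have h2 : (A' v : V) = ((c • v : ↥U) : V) := by rw [this]
      simpa [hA'def, LinearMap.restrict_apply] using h2
    simp [hBdef, hAv]
  have hKne : K ≠ ⊥ := by
    intro h0
    rw [h0] at hvK
    exact hv.2 (Subtype.ext (by simpa using hvK))
  rcases hU.2 K hK inf_le_left with h | h
  · exact absurd h hKne
  · intro x hx
    have hxK : x ∈ K := h ▸ hx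
    have : B x = 0 := hxK.2
    have : A x - c • x = 0 := by simpa [hBdef] using this
    rw [sub_eq_zero] at this; exact this


lemma exists_irreducible_le {W : Submodule ℂ V} (hW : IsGSubmodule ρ W) (hWne : W ≠ ⊥) :
    ∃ X, IsGSubmodule ρ X ∧ IsGIrreducible ρ X ∧ X ≤ W := by
  classical
  have hex : ∃ n, ∃ X : Submodule ℂ V,
      IsGSubmodule ρ X ∧ X ≠ ⊥ ∧ X ≤ W ∧ Module.finrank ℂ X = n :=
    ⟨Module.finrank ℂ W, W, hW, hWne, le_refl W, rfl⟩
  obtain ⟨X, hXs, hXne, hXle, hXrank⟩ := Nat.find_spec hex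
  refine ⟨X, hXs, ⟨hXne, ?_⟩, hXle⟩
  intro Y hYs hYle
  by_cases hY : Y = ⊥
  · exact Or.inl hY
  · right
    have hmin : Nat.find hex ≤ Module.finrank ℂ Y :=
      Nat.find_min' hex ⟨Y, hYs, hY, hYle.trans hXle, rfl⟩
    exact Submodule.eq_of_le_of_finrank_le hYle (hXrank ▸ hmin)

end Helpers

open scoped InnerProductSpace

/-- given a complete set `U_1, …, U_k` of irreducible `G`-submodules of `V`,
nonzero vectors `e_λ ∈ U_λ`, and orthonormal bases `B_λ = (b λ i)` of
`W_λ = {A e_λ : A ∈ End_G(V)}`, the map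
`ψ : A ↦ ⊕_λ (⟨A b, b'⟩)_{b,b' ∈ B_λ}` is a bijective ℂ-algebra `∗`-homomorphism from
`End_G(V)` onto `⊕_λ ℂ^{B_λ × B_λ}`. -/
theorem stmt_3 [Group G] [Fintype G] [NormedAddCommGroup V] [InnerProductSpace ℂ V]
    [FiniteDimensional ℂ V]
    (ρ : G →* (V →ₗ[ℂ] V))
    (hunit : ∀ g x y, (inner ℂ (ρ g x) (ρ g y) : ℂ) = inner ℂ x y)
    (k : ℕ) (U : Fin k → Submodule ℂ V)
    (hsub : ∀ lam, IsGSubmodule ρ (U lam))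
    (hirr : ∀ lam, IsGIrreducible ρ (U lam))
    (hpairwise : ∀ lam mu, lam ≠ mu → ¬ GIso ρ (U lam) (U mu))
    (hcomplete : ∀ W : Submodule ℂ V, IsGSubmodule ρ W → IsGIrreducible ρ W →
      ∃ lam, GIso ρ W (U lam))
    (e : Fin k → V) (he : ∀ lam, e lam ∈ U lam) (he0 : ∀ lam, e lam ≠ 0)
    (ι : Fin k → Type*) [∀ lam, Fintype (ι lam)] [∀ lam, DecidableEq (ι lam)]
    (b : (lam : Fin k) → ι lam → V)
    (hON : ∀ lam, Orthonormal ℂ (b lam))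
    (hspan : ∀ lam, (Submodule.span ℂ (Set.range (b lam)) : Set V) =
      {v | ∃ A : V →ₗ[ℂ] V, IsEquivariant ρ A ∧ A (e lam) = v}) :
    ∃ ψ : (V →ₗ[ℂ] V) → ((lam : Fin k) → Matrix (ι lam) (ι lam) ℂ),
      (∀ A, ψ A = fun lam => Matrix.of fun i j => (inner ℂ (b lam i) (A (b lam j)) : ℂ)) ∧
      IsLinearMap ℂ ψ ∧
      Set.BijOn ψ {A | IsEquivariant ρ A} Set.univ ∧
      ψ 1 = 1 ∧
      (∀ A B : V →ₗ[ℂ] V, IsEquivariant ρ A → IsEquivariant ρ B →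
        ψ (A * B) = ψ A * ψ B) ∧
      (∀ A : V →ₗ[ℂ] V, IsEquivariant ρ A →
        ψ (LinearMap.adjoint A) = star (ψ A)) := by
  classical
  set ψ : (V →ₗ[ℂ] V) → ((lam : Fin k) → Matrix (ι lam) (ι lam) ℂ) :=
    fun A => fun lam => Matrix.of fun i j => (inner ℂ (b lam i) (A (b lam j)) : ℂ) with hψ
  have hψapp : ∀ A lam i j, ψ A lam i j = ⟪b lam i, A (b lam j)⟫_ℂ := fun A lam i j => rfl
  -- membership translations
  have hWmem : ∀ lam (v : V), v ∈ Submodule.span ℂ (Set.range (b lam)) ↔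
      ∃ A : V →ₗ[ℂ] V, IsEquivariant ρ A ∧ A (e lam) = v := by
    intro lam v
    have := Set.ext_iff.mp (hspan lam) v
    simpa using this
  have hb_mem : ∀ lam i, ∃ A : V →ₗ[ℂ] V, IsEquivariant ρ A ∧ A (e lam) = b lam i :=
    fun lam i => (hWmem lam _).1 (Submodule.subset_span (Set.mem_range_self i))
  have hWclosed : ∀ lam (A : V →ₗ[ℂ] V), IsEquivariant ρ A → ∀ v,
      v ∈ Submodule.span ℂ (Set.range (b lam)) →
      A v ∈ Submodule.span ℂ (Set.range (b lam)) := by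
    intro lam A hA v hv
    obtain ⟨C, hC, rfl⟩ := (hWmem lam v).1 hv
    exact (hWmem lam _).2 ⟨A ∘ₗ C, hA.comp' ρ hC, rfl⟩
  -- orthonormal expansion
  have hexp : ∀ lam (x : V), x ∈ Submodule.span ℂ (Set.range (b lam)) →
      x = ∑ i, ⟪b lam i, x⟫_ℂ • b lam i := by
    intro lam x hx
    obtain ⟨c, rfl⟩ := (Submodule.mem_span_range_iff_exists_fun ℂ).1 hx
    have hco : ∀ j, ⟪b lam j, ∑ i, c i • b lam i⟫_ℂ = c j := by
      intro j
      rw [inner_sum]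
      simp [inner_smul_right, orthonormal_iff_ite.mp (hON lam)]
    simp only [hco]

  -- projection formulas
  have hproj_lam : ∀ lam (z : V), (∃ C : V →ₗ[ℂ] V, IsEquivariant ρ C ∧ C (e lam) = z) →
      projL (U lam) z = ((((‖e lam‖ : ℂ))^2)⁻¹ * ⟪e lam, z⟫_ℂ) • e lam := by
    rintro lam z ⟨C, hC, rfl⟩
    have hQ : IsEquivariant ρ (projL (U lam) ∘ₗ C) :=
      (projL_equivariant ρ hunit (hsub lam)).comp' ρ hC
    have hQmaps : ∀ x ∈ U lam, (projL (U lam) ∘ₗ C) x ∈ U lam := fun x _ => projL_mem _ _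
    obtain ⟨c, hc⟩ := schur_endo ρ hQ (hirr lam) (hsub lam) hQmaps
    have h1 : projL (U lam) (C (e lam)) = c • e lam := hc _ (he lam)
    have h3 : ⟪e lam, projL (U lam) (C (e lam))⟫_ℂ = ⟪e lam, C (e lam)⟫_ℂ := by
      rw [← projL_inner, projL_eq_self (he lam)]
    have h2 : c * ⟪e lam, e lam⟫_ℂ = ⟪e lam, C (e lam)⟫_ℂ := by
      rw [← h3, h1, inner_smul_right]
    have hee : ⟪e lam, e lam⟫_ℂ = ((‖e lam‖ : ℂ))^2 := inner_self_eq_norm_sq_to_K _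
    have hne : (((‖e lam‖ : ℂ))^2) ≠ 0 := by
      intro h
      exact he0 lam (by simpa using h)
    rw [h1]
    congr 1
    rw [hee] at h2
    field_simp
    rw [← h2]
    rw [mul_div_cancel_right₀ _ hne]
  have hproj_ne : ∀ lam mu, mu ≠ lam → ∀ (z : V),
      (∃ C : V →ₗ[ℂ] V, IsEquivariant ρ C ∧ C (e mu) = z) → projL (U lam) z = 0 := by
    rintro lam mu hmu z ⟨C, hC, rfl⟩
    have hQ : IsEquivariant ρ (projL (U lam) ∘ₗ C) :=
      (projL_equivariant ρ hunit (hsub lam)).comp' ρ hC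
    have hQmaps : ∀ x ∈ U mu, (projL (U lam) ∘ₗ C) x ∈ U lam := fun x _ => projL_mem _ _
    rcases schur_hom ρ hQ (hirr mu) (hsub mu) (hirr lam) hQmaps with h | h
    · exact h _ (he mu)
    · exact absurd ⟨_, hQ, h⟩ (hpairwise mu lam hmu)
  -- matrix units are hit
  have hSblock : ∀ lam (i0 j0 : ι lam), ∃ S : V →ₗ[ℂ] V, IsEquivariant ρ S ∧
      (∀ a c : ι lam, ⟪b lam a, S (b lam c)⟫_ℂ =
        (if a = i0 then 1 else 0) * (if c = j0 then 1 else 0)) ∧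
      (∀ mu, mu ≠ lam → ∀ (a c : ι mu), ⟪b mu a, S (b mu c)⟫_ℂ = 0) := by
    intro lam i0 j0
    obtain ⟨A₁, hA₁, hA₁e⟩ := hb_mem lam i0
    obtain ⟨A₂, hA₂, hA₂e⟩ := hb_mem lam j0
    have hadj : IsEquivariant ρ (LinearMap.adjoint A₂) := isEquivariant_adjoint ρ hunit hA₂
    set S : V →ₗ[ℂ] V :=
      (((‖e lam‖ : ℂ))^2) • (A₁ ∘ₗ projL (U lam) ∘ₗ LinearMap.adjoint A₂) with hSdef
    have hS : IsEquivariant ρ S :=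
      (hA₁.comp' ρ (((projL_equivariant ρ hunit (hsub lam)).comp' ρ hadj))).smul' ρ _
    refine ⟨S, hS, ?_, ?_⟩
    · intro a c
      obtain ⟨C, hC, hCe⟩ := hb_mem lam c
      have hmem : ∃ C' : V →ₗ[ℂ] V, IsEquivariant ρ C' ∧
          C' (e lam) = LinearMap.adjoint A₂ (b lam c) :=
        ⟨LinearMap.adjoint A₂ ∘ₗ C, hadj.comp' ρ hC, by simp [LinearMap.comp_apply, hCe]⟩
      have hP := hproj_lam lam _ hmem
      have hinner : ⟪e lam, LinearMap.adjoint A₂ (b lam c)⟫_ℂ = ⟪b lam j0, b lam c⟫_ℂ := by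
        rw [LinearMap.adjoint_inner_right, hA₂e]
      have hne : (((‖e lam‖ : ℂ))^2) ≠ 0 := fun h => he0 lam (by simpa using h)
      have hval : S (b lam c) = (⟪b lam j0, b lam c⟫_ℂ) • b lam i0 := by
        rw [hSdef]
        simp only [LinearMap.smul_apply, LinearMap.comp_apply]
        rw [hP, hinner, map_smul, hA₁e, smul_smul]
        congr 1
        field_simp
        exact mul_div_cancel_left₀ _ (fun h => hne (by rw [h]; ring))
      rw [hval, inner_smul_right, orthonormal_iff_ite.mp (hON lam),
        orthonormal_iff_ite.mp (hON lam)]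
      by_cases h2 : c = j0
      · simp [h2]
      · have h2' : ¬ (j0 = c) := fun h => h2 h.symm
        simp [h2, h2']
    · intro mu hmu a c
      obtain ⟨C, hC, hCe⟩ := hb_mem mu c
      have hmem : ∃ C' : V →ₗ[ℂ] V, IsEquivariant ρ C' ∧
          C' (e mu) = LinearMap.adjoint A₂ (b mu c) :=
        ⟨LinearMap.adjoint A₂ ∘ₗ C, hadj.comp' ρ hC, by simp [LinearMap.comp_apply, hCe]⟩
      have hP := hproj_ne lam mu hmu _ hmem
      rw [hSdef]
      simp only [LinearMap.smul_apply, LinearMap.comp_apply]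
      rw [hP]
      simp
  -- injectivity kernel lemma
  have hker : ∀ A : V →ₗ[ℂ] V, IsEquivariant ρ A → ψ A = 0 → A = 0 := by
    intro A hA h0
    have hb0 : ∀ lam (i : ι lam), A (b lam i) = 0 := by
      intro lam i
      have hmem : A (b lam i) ∈ Submodule.span ℂ (Set.range (b lam)) :=
        hWclosed lam A hA _ (Submodule.subset_span (Set.mem_range_self i))
      have hcoef : ∀ j, ⟪b lam j, A (b lam i)⟫_ℂ = 0 := by
        intro j
        have := congrFun (congrFun (congrFun h0 lam) j) i
        simpa [hψ] using this
      rw [hexp lam _ hmem]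
      simp [hcoef]
    have hWk : ∀ lam (w : V), w ∈ Submodule.span ℂ (Set.range (b lam)) → A w = 0 := by
      intro lam w hw
      rw [hexp lam w hw, map_sum]
      simp [hb0]
    by_contra hAne
    have hker_ne : LinearMap.ker A ≠ ⊤ := fun h => hAne (LinearMap.ker_eq_top.1 h)
    have hKs : IsGSubmodule ρ (LinearMap.ker A) := isGSubmodule_ker ρ hA
    have hKperp : IsGSubmodule ρ (LinearMap.ker A)ᗮ := isGSubmodule_orthogonal ρ hunit hKs
    have hKperp_ne : (LinearMap.ker A)ᗮ ≠ ⊥ := by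
      intro h
      exact hker_ne (Submodule.orthogonal_eq_bot_iff.1 h)
    obtain ⟨X, hXs, hXirr, hXle⟩ := exists_irreducible_le ρ hKperp hKperp_ne
    obtain ⟨lam, f, hf, hfb⟩ := hcomplete X hXs hXirr
    have hq : IsEquivariant ρ (projL X ∘ₗ LinearMap.adjoint f) :=
      (projL_equivariant ρ hunit hXs).comp' ρ (isEquivariant_adjoint ρ hunit hf)
    set q := projL X ∘ₗ LinearMap.adjoint f with hqdef
    have hqW : q (e lam) ∈ Submodule.span ℂ (Set.range (b lam)) :=
      (hWmem lam _).2 ⟨q, hq, rfl⟩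
    by_cases hq0 : q (e lam) = 0
    · -- then f vanishes on X : contradiction
      have hkerq : IsGSubmodule ρ (LinearMap.ker q) := isGSubmodule_ker ρ hq
      have hUle : U lam ≤ LinearMap.ker q :=
        irreducible_le_of_mem ρ hkerq (hirr lam) (hsub lam) (he lam) (he0 lam)
          (LinearMap.mem_ker.2 hq0)
      have hfX : ∀ x ∈ X, f x = 0 := by
        intro x hx
        have h1 : f x ∈ (U lam : Set V) := hfb.1 hx
        have h2 : q (f x) = 0 := hUle h1
        have h3 : LinearMap.adjoint f (f x) ∈ Xᗮ := by
          rw [hqdef] at h2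
          simp only [LinearMap.comp_apply] at h2
          have : Submodule.orthogonalProjectionOnto X (LinearMap.adjoint f (f x)) = 0 := by
            apply Subtype.ext
            simpa [projL] using h2
          exact Submodule.orthogonalProjectionOnto_eq_zero_iff.1 this
        have h4 : ⟪LinearMap.adjoint f (f x), x⟫_ℂ = 0 :=
          (Submodule.mem_orthogonal' X _).1 h3 x hx
        rw [LinearMap.adjoint_inner_left] at h4
        exact inner_self_eq_zero.1 h4
      obtain ⟨x, hx, hfx⟩ := hfb.2.2 (he lam)
      exact he0 lam (by rw [← hfx, hfX x hx])
    · -- q (e lam) generates X inside ker A : contradiction with X ≤ (ker A)ᗮ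
      have hqX : q (e lam) ∈ X := projL_mem X _
      have hqker : q (e lam) ∈ LinearMap.ker A := LinearMap.mem_ker.2 (hWk lam _ hqW)
      have hXle' : X ≤ LinearMap.ker A :=
        irreducible_le_of_mem ρ hKs hXirr hXs hqX hq0 hqker
      obtain ⟨x, hx, hx0⟩ := Submodule.exists_mem_ne_zero_of_ne_bot hXirr.1
      have h1 : x ∈ (LinearMap.ker A)ᗮ := hXle hx
      have h2 : x ∈ LinearMap.ker A := hXle' hx
      have : ⟪x, x⟫_ℂ = 0 := (Submodule.mem_orthogonal _ x).1 h1 x h2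
      exact hx0 (inner_self_eq_zero.1 this)
  have hψsub : ∀ A B : V →ₗ[ℂ] V, ψ (A - B) = ψ A - ψ B := by
    intro A B
    funext lam
    ext i j
    simp [hψ, inner_sub_right, Matrix.sub_apply]
  refine ⟨ψ, fun A => rfl, ?_, ⟨?_, ?_, ?_⟩, ?_, ?_, ?_⟩
  · -- linear
    constructor
    · intro A B; funext lam; ext i j; simp [hψ, inner_add_right, Matrix.add_apply]
    · intro c A; funext lam; ext i j
      simp [hψ, inner_smul_right, Matrix.smul_apply]
  · -- maps to
    exact fun A _ => Set.mem_univ _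
  · -- injective
    intro A hA B hB hAB
    have h0 : ψ (A - B) = 0 := by rw [hψsub, hAB, sub_self]
    have := hker (A - B) (hA.sub' ρ hB) h0
    rwa [sub_eq_zero] at this
  · -- surjective
    intro M _
    choose S hSeq hSdiag hSoff using hSblock
    set A : V →ₗ[ℂ] V := ∑ lam, ∑ i, ∑ j, M lam i j • S lam i j with hAdef
    have hAeq : IsEquivariant ρ A := by
      apply isEquivariant_sum
      intro lam _
      apply isEquivariant_sum
      intro i _
      apply isEquivariant_sum
      intro j _
      exact (hSeq lam i j).smul' ρ _
    refine ⟨A, hAeq, ?_⟩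
    funext mu
    ext a c
    have expand : ψ A mu a c =
        ∑ lam, ∑ i, ∑ j, M lam i j * ⟪b mu a, S lam i j (b mu c)⟫_ℂ := by
      rw [hψapp, hAdef]
      simp only [LinearMap.sum_apply, LinearMap.smul_apply, inner_sum, inner_smul_right]
    show ψ A mu a c = M mu a c
    rw [expand, Finset.sum_eq_single mu]
    · have hterm : ∀ i j, M mu i j * ⟪b mu a, S mu i j (b mu c)⟫_ℂ =
          M mu i j * ((if a = i then 1 else 0) * (if c = j then 1 else 0)) :=
        fun i j => by rw [hSdiag]
      simp only [hterm]
      simp [mul_ite, Finset.sum_ite_eq]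
    · intro lam' _ hne
      apply Finset.sum_eq_zero
      intro i _
      apply Finset.sum_eq_zero
      intro j _
      rw [hSoff lam' i j mu (Ne.symm hne), mul_zero]
    · intro h
      exact absurd (Finset.mem_univ mu) h
  · -- unit
    funext lam
    ext i j
    have := orthonormal_iff_ite.mp (hON lam) i j
    simp [hψ, Matrix.one_apply, this]
  · -- multiplicative
    intro A B hA hB
    funext lam
    ext i j
    have hBb : B (b lam j) ∈ Submodule.span ℂ (Set.range (b lam)) :=
      hWclosed lam B hB _ (Submodule.subset_span (Set.mem_range_self j))
    calc ψ (A * B) lam i j = ⟪b lam i, A (B (b lam j))⟫_ℂ := rfl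
      _ = ⟪b lam i, A (∑ l, ⟪b lam l, B (b lam j)⟫_ℂ • b lam l)⟫_ℂ := by
          rw [← hexp lam _ hBb]
      _ = ∑ l, ⟪b lam i, A (b lam l)⟫_ℂ * ⟪b lam l, B (b lam j)⟫_ℂ := by
          rw [map_sum, inner_sum]
          exact Finset.sum_congr rfl fun l _ => by
            rw [map_smul, inner_smul_right]; ring
      _ = (ψ A * ψ B) lam i j := by
          simp [hψ, Matrix.mul_apply]
  · -- star
    intro A hA
    funext lam
    ext i j
    calc ψ (LinearMap.adjoint A) lam i j = ⟪b lam i, LinearMap.adjoint A (b lam j)⟫_ℂ := rfl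
      _ = ⟪A (b lam i), b lam j⟫_ℂ := LinearMap.adjoint_inner_right A _ _
      _ = star (⟪b lam j, A (b lam i)⟫_ℂ) := (inner_conj_symm _ _).symm
      _ = star (ψ A) lam i j := rfl
end
end

section
/- Let λ be a partition of n into at most p parts, let D ∈ P(n,p), and let λ' := D^T·𝟙 (the vector of column sums of D). If λ' = λ, define t(D) to be the tableau of shape λ whose i-th row contains exactly D_{j,i} entries equal to j (for each j ∈ [p]), arranged so that each row is non-decreasing. Then A_D · e_λ = e_{t(D)} if λ' = λ, and A_D · e_λ = 0 otherwise. -/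
open scoped Classical

noncomputable section

/-- Row (0-indexed) of the `k`-th box (0-indexed, row-major numbering) of the Ferrers
diagram of `lam`: the number of indices `i` with `λ_0 + ⋯ + λ_i ≤ k`. -/
def rowOf (p : ℕ) (lam : Fin p → ℕ) (k : ℕ) : ℕ :=
  (Finset.univ.filter fun i : Fin p => (∑ j ∈ Finset.univ.filter (· ≤ i), lam j) ≤ k).card

/-- Column (0-indexed) of the `k`-th box of the Ferrers diagram of `lam`. -/
def colOf (p : ℕ) (lam : Fin p → ℕ) (k : ℕ) : ℕ :=
  k - ∑ j ∈ Finset.univ.filter (fun j : Fin p => (j : ℕ) < rowOf p lam k), lam j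

/-- The column group `C_λ`: permutations of the boxes mapping every box to a box
in the same column. -/
def colGroup (n p : ℕ) (lam : Fin p → ℕ) : Finset (Equiv.Perm (Fin n)) :=
  Finset.univ.filter fun σ => ∀ k : Fin n, colOf p lam (σ k : ℕ) = colOf p lam (k : ℕ)

/-- The row group `R_λ`: permutations of the boxes mapping every box to a box
in the same row. -/
def rowGroup (n p : ℕ) (lam : Fin p → ℕ) : Finset (Equiv.Perm (Fin n)) :=
  Finset.univ.filter fun σ => ∀ k : Fin n, rowOf p lam (σ k : ℕ) = rowOf p lam (k : ℕ)

/-- The vector `e_t = Σ_{σ ∈ C_λ} sgn(σ) Σ_{t' ∼ t} χ^{σ t'} ∈ ℂ^{[p]^n}`, where `t' ∼ t`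
means `t' = π t` for some `π ∈ R_λ`, and `(σ t)(k) = t(σ⁻¹ k)`. -/
noncomputable def eT (n p : ℕ) (lam : Fin p → ℕ) (t : Fin n → Fin p) :
    (Fin n → Fin p) → ℂ :=
  ∑ σ ∈ colGroup n p lam, ((Equiv.Perm.sign σ : ℤ) : ℂ) •
    ∑ t' ∈ Finset.univ.filter (fun t' : Fin n → Fin p =>
        ∃ π ∈ rowGroup n p lam, t' = fun k => t (π⁻¹ k)),
      (Pi.single (fun k => t' (σ⁻¹ k)) (1 : ℂ) : (Fin n → Fin p) → ℂ)

/-- The tableau `t_λ` whose entries in row `i` all equal `i`. -/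
def tLam (n p : ℕ) (hp : 0 < p) (lam : Fin p → ℕ) : Fin n → Fin p :=
  fun k => ⟨rowOf p lam (k : ℕ) % p, Nat.mod_lt _ hp⟩

/-- The vector `e_λ := e_{t_λ}`. -/
noncomputable def eLam (n p : ℕ) (hp : 0 < p) (lam : Fin p → ℕ) : (Fin n → Fin p) → ℂ :=
  eT n p lam (tLam n p hp lam)


open Finset

def SS (p : ℕ) (w : Fin p → ℕ) (r : ℕ) : ℕ :=
  ∑ j ∈ Finset.univ.filter (fun j : Fin p => (j : ℕ) < r), w j

def rank (p : ℕ) (w : Fin p → ℕ) (k : ℕ) : ℕ :=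
  (Finset.univ.filter fun i : Fin p => (∑ j ∈ Finset.univ.filter (· ≤ i), w j) ≤ k).card

lemma SS_succ {p : ℕ} (w : Fin p → ℕ) (i : Fin p) :
    SS p w ((i : ℕ) + 1) = SS p w (i : ℕ) + w i := by
  unfold SS
  have h : (Finset.univ.filter (fun j : Fin p => (j : ℕ) < (i : ℕ) + 1))
      = insert i (Finset.univ.filter (fun j : Fin p => (j : ℕ) < (i : ℕ))) := by
    ext j
    simp only [Finset.mem_filter, Finset.mem_univ, true_and, Finset.mem_insert,
      Nat.lt_succ_iff_lt_or_eq]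
    constructor
    · rintro (h | h)
      · exact Or.inr h
      · exact Or.inl (Fin.ext h)
    · rintro (rfl | h)
      · exact Or.inr rfl
      · exact Or.inl h
  rw [h, Finset.sum_insert (by simp), add_comm]

lemma P_eq {p : ℕ} (w : Fin p → ℕ) (i : Fin p) :
    (∑ j ∈ Finset.univ.filter (· ≤ i), w j) = SS p w ((i : ℕ) + 1) := by
  apply Finset.sum_congr _ (fun _ _ => rfl)
  ext j
  simp only [Finset.mem_filter, Finset.mem_univ, true_and, SS, Nat.lt_succ_iff, Fin.le_def]

lemma SS_le_sum {p : ℕ} (w : Fin p → ℕ) (r : ℕ) : SS p w r ≤ ∑ j, w j :=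
  Finset.sum_le_sum_of_subset (Finset.filter_subset _ _)

lemma rank_mono {p : ℕ} (w : Fin p → ℕ) {k k' : ℕ} (h : k ≤ k') :
    rank p w k ≤ rank p w k' :=
  Finset.card_le_card (by
    intro i hi
    simp only [Finset.mem_filter, Finset.mem_univ, true_and] at hi ⊢
    exact le_trans hi h)

lemma rank_lt_iff {p : ℕ} (w : Fin p → ℕ) (k : ℕ) (i : Fin p) :
    (i : ℕ) < rank p w k ↔ SS p w (i : ℕ) + w i ≤ k := by
  rw [← SS_succ, ← P_eq]
  constructor
  · intro h
    by_contra hP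
    have hsub : (Finset.univ.filter fun i' : Fin p =>
        (∑ j ∈ Finset.univ.filter (· ≤ i'), w j) ≤ k) ⊆ Finset.Iio i := by
      intro j hj
      simp only [Finset.mem_filter, Finset.mem_univ, true_and] at hj
      rw [Finset.mem_Iio]
      by_contra hij
      push_neg at hij
      refine hP (le_trans (Finset.sum_le_sum_of_subset ?_) hj)
      intro x hx
      simp only [Finset.mem_filter, Finset.mem_univ, true_and] at hx ⊢
      exact le_trans hx hij
    have := Finset.card_le_card hsub
    rw [Fin.card_Iio] at this
    exact absurd (lt_of_lt_of_le h this) (lt_irrefl _)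
  · intro h
    have hsub : Finset.Iic i ⊆ (Finset.univ.filter fun i' : Fin p =>
        (∑ j ∈ Finset.univ.filter (· ≤ i'), w j) ≤ k) := by
      intro j hj
      rw [Finset.mem_Iic] at hj
      simp only [Finset.mem_filter, Finset.mem_univ, true_and]
      refine le_trans (Finset.sum_le_sum_of_subset ?_) h
      intro x hx
      simp only [Finset.mem_filter, Finset.mem_univ, true_and] at hx ⊢
      exact le_trans hx hj
    have := Finset.card_le_card hsub
    rw [Fin.card_Iic] at this
    unfold rank
    omega
lemma rank_le_p {p : ℕ} (w : Fin p → ℕ) (k : ℕ) : rank p w k ≤ p :=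
  le_trans (Finset.card_le_card (Finset.filter_subset _ _)) (by simp)

lemma rank_lt_p {p : ℕ} (hp : 0 < p) (w : Fin p → ℕ) (k : ℕ) (hk : k < ∑ j, w j) :
    rank p w k < p := by
  by_contra h
  push_neg at h
  set i : Fin p := ⟨p - 1, by omega⟩ with hi
  have h1 : (i : ℕ) < rank p w k := by simp only [hi]; omega
  rw [rank_lt_iff] at h1
  have h2 : SS p w (i : ℕ) + w i = ∑ j, w j := by
    rw [← SS_succ, SS]
    apply Finset.sum_congr _ (fun _ _ => rfl)
    ext j
    simp only [Finset.mem_filter, Finset.mem_univ, true_and, iff_true, hi]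
    omega
  omega

lemma rank_eq_iff {p : ℕ} (w : Fin p → ℕ) (k : ℕ) (i : Fin p) :
    rank p w k = (i : ℕ) ↔ SS p w (i : ℕ) ≤ k ∧ k < SS p w (i : ℕ) + w i := by
  constructor
  · intro h
    have h1 : ¬ ((i : ℕ) < rank p w k) := by omega
    rw [rank_lt_iff] at h1
    push_neg at h1
    refine ⟨?_, h1⟩
    rcases Nat.eq_zero_or_pos (i : ℕ) with h0 | h0
    · rw [h0]
      simp [SS]
    · set i' : Fin p := ⟨(i : ℕ) - 1, by omega⟩ with hi'
      have h2 : (i' : ℕ) < rank p w k := by simp only [hi']; omega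
      rw [rank_lt_iff, ← SS_succ] at h2
      have : (i' : ℕ) + 1 = (i : ℕ) := by simp only [hi']; omega
      rwa [this] at h2
  · rintro ⟨h1, h2⟩
    have h3 : ¬ ((i : ℕ) < rank p w k) := by rw [rank_lt_iff]; omega
    rcases Nat.eq_zero_or_pos (i : ℕ) with h0 | h0
    · omega
    · set i' : Fin p := ⟨(i : ℕ) - 1, by omega⟩ with hi'
      have h4 : (i' : ℕ) < rank p w k := by
        rw [rank_lt_iff, ← SS_succ]
        have : (i' : ℕ) + 1 = (i : ℕ) := by simp only [hi']; omega
        rw [this]; exact h1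
      simp only [hi'] at h4
      omega

lemma card_Ico_filter {n : ℕ} (a b : ℕ) (hb : b ≤ n) :
    (Finset.univ.filter fun k : Fin n => a ≤ (k : ℕ) ∧ (k : ℕ) < b).card = b - a := by
  rw [← Nat.card_Ico a b]
  apply Finset.card_bij' (fun (k : Fin n) _ => (k : ℕ))
    (fun m hm => (⟨m, lt_of_lt_of_le (Finset.mem_Ico.1 hm).2 hb⟩ : Fin n))
  all_goals intro x hx
  all_goals simp_all [Finset.mem_Ico, Finset.mem_filter]
  all_goals exact Finset.mem_Ico.mp hx

lemma card_filter_comp_perm {n : ℕ} (π : Equiv.Perm (Fin n)) (P : Fin n → Prop)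
    [DecidablePred P] [DecidablePred fun k => P (π k)] :
    (Finset.univ.filter fun k => P (π k)).card = (Finset.univ.filter P).card := by
  rw [← Fintype.card_subtype, ← Fintype.card_subtype]
  exact Fintype.card_congr (Equiv.subtypeEquiv π fun a => Iff.rfl)
lemma exists_perm_of_counts {α β : Type*} [Fintype α] [DecidableEq α] [DecidableEq β]
    (u v : α → β)
    (h : ∀ x : β, (Finset.univ.filter fun k => u k = x).card
        = (Finset.univ.filter fun k => v k = x).card) :
    ∃ π : Equiv.Perm α, ∀ k, v (π k) = u k := by
  have e : ∀ x : β, {k : α // u k = x} ≃ {k : α // v k = x} := fun x =>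
    ((Equiv.subtypeEquivRight (q := fun k => k ∈ Finset.univ.filter fun k => u k = x)
        (fun k => by simp)).trans (Finset.equivOfCardEq (h x))).trans
      (Equiv.subtypeEquivRight (fun k => by simp))
  refine ⟨((Equiv.sigmaFiberEquiv u).symm.trans
      ((Equiv.sigmaCongrRight e).trans (Equiv.sigmaFiberEquiv v))), fun k => ?_⟩
  simp only [Equiv.trans_apply]
  have h1 : (Equiv.sigmaFiberEquiv u).symm k = ⟨u k, k, rfl⟩ := by
    rw [Equiv.symm_apply_eq]; rfl
  rw [h1]
  exact ((e (u k)) ⟨k, rfl⟩).2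

variable {n p : ℕ}

lemma rowOf_lt (hp : 0 < p) (lam : Fin p → ℕ) (hsum : ∑ i, lam i = n) (k : Fin n) :
    rowOf p lam (k : ℕ) < p :=
  rank_lt_p hp lam _ (by rw [hsum]; exact k.isLt)

lemma tLam_val (hp : 0 < p) (lam : Fin p → ℕ) (hsum : ∑ i, lam i = n) (m : Fin n) :
    ((tLam n p hp lam m : Fin p) : ℕ) = rowOf p lam (m : ℕ) :=
  Nat.mod_eq_of_lt (rowOf_lt hp lam hsum m)

lemma tLam_eq_iff (hp : 0 < p) (lam : Fin p → ℕ) (hsum : ∑ i, lam i = n)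
    (m : Fin n) (j : Fin p) :
    tLam n p hp lam m = j ↔ rowOf p lam (m : ℕ) = (j : ℕ) := by
  rw [Fin.ext_iff, tLam_val hp lam hsum]

lemma rowOf_eq_iff (lam : Fin p → ℕ) (k : ℕ) (i : Fin p) :
    rowOf p lam k = (i : ℕ) ↔ SS p lam (i : ℕ) ≤ k ∧ k < SS p lam (i : ℕ) + lam i :=
  rank_eq_iff lam k i

lemma card_row (hp : 0 < p) (lam : Fin p → ℕ) (hsum : ∑ i, lam i = n) (i : Fin p) :
    (Finset.univ.filter fun k : Fin n => rowOf p lam (k : ℕ) = (i : ℕ)).card = lam i := by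
  have hb : SS p lam (i : ℕ) + lam i ≤ n := by
    rw [← SS_succ]
    calc SS p lam ((i : ℕ) + 1) ≤ ∑ j, lam j := SS_le_sum lam _
    _ = n := hsum
  have heq : (Finset.univ.filter fun k : Fin n => rowOf p lam (k : ℕ) = (i : ℕ))
      = (Finset.univ.filter fun k : Fin n =>
          SS p lam (i : ℕ) ≤ (k : ℕ) ∧ (k : ℕ) < SS p lam (i : ℕ) + lam i) :=
    Finset.filter_congr (fun k _ => rowOf_eq_iff lam (k : ℕ) i)
  rw [heq, card_Ico_filter _ _ hb]
  omega

/-- counts of values of `b` within rows -/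
def cnt (n p : ℕ) (lam : Fin p → ℕ) (b : Fin n → Fin p) (i j : Fin p) : ℕ :=
  (Finset.univ.filter fun m : Fin n => b m = i ∧ rowOf p lam (m : ℕ) = (j : ℕ)).card

lemma Dmat_shift (hp : 0 < p) (lam : Fin p → ℕ) (hsum : ∑ i, lam i = n)
    (a : Fin n → Fin p) (σ : Equiv.Perm (Fin n)) (i j : Fin p) :
    Dmat a (fun k => tLam n p hp lam (σ⁻¹ k)) i j = cnt n p lam (fun m => a (σ m)) i j := by
  show (Finset.univ.filter fun k : Fin n =>
      a k = i ∧ tLam n p hp lam (σ⁻¹ k) = j).card = _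
  rw [← card_filter_comp_perm σ (fun k => a k = i ∧ tLam n p hp lam (σ⁻¹ k) = j)]
  unfold cnt
  congr 1
  apply Finset.filter_congr
  intro m _
  simp only [Equiv.Perm.inv_def, Equiv.symm_apply_apply, tLam_eq_iff hp lam hsum]

lemma cnt_col_sum (hp : 0 < p) (lam : Fin p → ℕ) (hsum : ∑ i, lam i = n)
    (b : Fin n → Fin p) (i : Fin p) :
    ∑ j : Fin p, cnt n p lam b j i = lam i := by
  have h := Finset.card_eq_sum_card_fiberwise
    (s := Finset.univ.filter fun k : Fin n => rowOf p lam (k : ℕ) = (i : ℕ))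
    (t := Finset.univ) (f := b) (fun x _ => Finset.mem_univ _)
  rw [card_row hp lam hsum i] at h
  rw [h]
  apply Finset.sum_congr rfl
  intro j _
  unfold cnt
  rw [Finset.filter_filter]
  congr 1
  apply Finset.filter_congr
  intro m _
  simp [and_comm]

lemma counts_iff (hp : 0 < p) (lam : Fin p → ℕ) (hsum : ∑ i, lam i = n)
    (D : Matrix (Fin p) (Fin p) ℕ) (tD : Fin n → Fin p)
    (htD : ∀ j i : Fin p, (Finset.univ.filter fun k : Fin n =>
      rowOf p lam (k : ℕ) = (i : ℕ) ∧ tD k = j).card = D j i)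
    (b : Fin n → Fin p) :
    (∀ i j : Fin p, cnt n p lam b i j = D i j) ↔
      ∃ π ∈ rowGroup n p lam, b = fun k => tD (π⁻¹ k) := by
  constructor
  · intro hc
    have hcounts : ∀ x : Fin p × ℕ,
        (Finset.univ.filter fun k : Fin n => (b k, rowOf p lam (k : ℕ)) = x).card
        = (Finset.univ.filter fun k : Fin n => (tD k, rowOf p lam (k : ℕ)) = x).card := by
      rintro ⟨j, r⟩
      by_cases hr : r < p
      · set i : Fin p := ⟨r, hr⟩ with hi
        have h1 : (Finset.univ.filter fun k : Fin n =>
            (b k, rowOf p lam (k : ℕ)) = (j, r)).card = cnt n p lam b j i := by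
          unfold cnt
          congr 1
          apply Finset.filter_congr
          intro m _
          simp [Prod.ext_iff, hi]
        have h2 : (Finset.univ.filter fun k : Fin n =>
            (tD k, rowOf p lam (k : ℕ)) = (j, r)).card = D j i := by
          rw [← htD j i]
          congr 1
          apply Finset.filter_congr
          intro m _
          simp [Prod.ext_iff, hi, and_comm]
        rw [h1, h2, hc j i]
      · have hz : ∀ c : Fin n → Fin p, (Finset.univ.filter fun k : Fin n =>
            (c k, rowOf p lam (k : ℕ)) = (j, r)) = ∅ := by
          intro c
          rw [Finset.filter_eq_empty_iff]
          intro k _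
          simp only [Prod.mk.injEq, not_and]
          intro _
          have := rowOf_lt hp lam hsum k
          omega
        rw [hz b, hz tD]
    obtain ⟨π, hπ⟩ := exists_perm_of_counts
      (fun k : Fin n => (b k, rowOf p lam (k : ℕ)))
      (fun k : Fin n => (tD k, rowOf p lam (k : ℕ))) hcounts
    have hπ1 : ∀ k, tD (π k) = b k := fun k => (Prod.mk.injEq _ _ _ _ ▸ hπ k).1
    have hπ2 : ∀ k, rowOf p lam ((π k : Fin n) : ℕ) = rowOf p lam (k : ℕ) :=
      fun k => (Prod.mk.injEq _ _ _ _ ▸ hπ k).2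
    refine ⟨π⁻¹, ?_, ?_⟩
    · rw [rowGroup, Finset.mem_filter]
      refine ⟨Finset.mem_univ _, fun k => ?_⟩
      have := hπ2 (π⁻¹ k)
      rw [Equiv.Perm.inv_def, Equiv.apply_symm_apply] at this
      exact this.symm
    · funext k
      simp only [inv_inv]
      exact (hπ1 k).symm
  · rintro ⟨π, hπ, rfl⟩
    rw [rowGroup, Finset.mem_filter] at hπ
    intro i j
    unfold cnt
    rw [← htD i j]
    rw [← card_filter_comp_perm π
      (fun m => tD (π⁻¹ m) = i ∧ rowOf p lam (m : ℕ) = (j : ℕ))]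
    congr 1
    apply Finset.filter_congr
    intro m _
    rw [Equiv.Perm.inv_def, Equiv.symm_apply_apply, hπ.2 m, and_comm]

lemma rowOrbit_tLam (hp : 0 < p) (lam : Fin p → ℕ) :
    (Finset.univ.filter (fun t' : Fin n → Fin p =>
      ∃ π ∈ rowGroup n p lam, t' = fun k => tLam n p hp lam (π⁻¹ k)))
      = {tLam n p hp lam} := by
  ext t'
  simp only [Finset.mem_filter, Finset.mem_univ, true_and, Finset.mem_singleton]
  constructor
  · rintro ⟨π, hπ, rfl⟩
    rw [rowGroup, Finset.mem_filter] at hπ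
    funext k
    have h1 : rowOf p lam ((π⁻¹ k : Fin n) : ℕ) = rowOf p lam (k : ℕ) := by
      have := hπ.2 (π⁻¹ k)
      rw [Equiv.Perm.inv_def, Equiv.apply_symm_apply] at this
      exact this.symm
    show tLam n p hp lam (π⁻¹ k) = tLam n p hp lam k
    unfold tLam
    exact Fin.ext (by simp only [h1])
  · rintro rfl
    refine ⟨1, ?_, ?_⟩
    · rw [rowGroup, Finset.mem_filter]
      exact ⟨Finset.mem_univ _, fun k => rfl⟩
    · funext k
      simp

lemma eT_apply (lam : Fin p → ℕ) (t : Fin n → Fin p) (a : Fin n → Fin p) :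
    eT n p lam t a = ∑ σ ∈ colGroup n p lam, ((Equiv.Perm.sign σ : ℤ) : ℂ) *
      ∑ t' ∈ Finset.univ.filter (fun t' : Fin n → Fin p =>
          ∃ π ∈ rowGroup n p lam, t' = fun k => t (π⁻¹ k)),
        (if a = fun k => t' (σ⁻¹ k) then (1 : ℂ) else 0) := by
  unfold eT
  rw [Finset.sum_apply]
  apply Finset.sum_congr rfl
  intro σ _
  rw [Pi.smul_apply, Finset.sum_apply, smul_eq_mul]
  congr 1
  apply Finset.sum_congr rfl
  intro t' _
  rw [Pi.single_apply]

lemma mulVec_eLam (hp : 0 < p) (lam : Fin p → ℕ) (hsum : ∑ i, lam i = n)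
    (D : Matrix (Fin p) (Fin p) ℕ) (a : Fin n → Fin p) :
    (AD n p D).mulVec (eLam n p hp lam) a
    = ∑ σ ∈ colGroup n p lam, ((Equiv.Perm.sign σ : ℤ) : ℂ) *
        (if Dmat a (fun k => tLam n p hp lam (σ⁻¹ k)) = D then 1 else 0) := by
  have hel : ∀ b, eLam n p hp lam b = ∑ σ ∈ colGroup n p lam,
      ((Equiv.Perm.sign σ : ℤ) : ℂ) *
      (if b = (fun k => tLam n p hp lam (σ⁻¹ k)) then 1 else 0) := by
    intro b
    unfold eLam eT
    rw [rowOrbit_tLam hp lam, Finset.sum_apply]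
    apply Finset.sum_congr rfl
    intro σ _
    rw [Finset.sum_singleton, Pi.smul_apply, smul_eq_mul, Pi.single_apply]
  show ∑ b, AD n p D a b * eLam n p hp lam b = _
  rw [Finset.sum_congr rfl (fun b _ => by rw [hel b])]
  simp_rw [Finset.mul_sum]
  rw [Finset.sum_comm]
  apply Finset.sum_congr rfl
  intro σ _
  have hterm : ∀ b : Fin n → Fin p,
      AD n p D a b * (((Equiv.Perm.sign σ : ℤ) : ℂ) *
        (if b = (fun k => tLam n p hp lam (σ⁻¹ k)) then 1 else 0))
      = if b = (fun k => tLam n p hp lam (σ⁻¹ k)) then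
          ((Equiv.Perm.sign σ : ℤ) : ℂ) * (if Dmat a b = D then 1 else 0) else 0 := by
    intro b
    by_cases hb : b = (fun k => tLam n p hp lam (σ⁻¹ k))
    · rw [if_pos hb, if_pos hb, mul_one]
      show (if Dmat a b = D then (1:ℂ) else 0) * _ = _
      ring
    · rw [if_neg hb, if_neg hb, mul_zero, mul_zero]
  rw [Finset.sum_congr rfl (fun b _ => hterm b),
    Finset.sum_ite_eq' Finset.univ (fun k => tLam n p hp lam (σ⁻¹ k))]
  simp

lemma key_sigma (hp : 0 < p) (lam : Fin p → ℕ) (hsum : ∑ i, lam i = n)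
    (D : Matrix (Fin p) (Fin p) ℕ) (tD : Fin n → Fin p)
    (htD : ∀ j i : Fin p, (Finset.univ.filter fun k : Fin n =>
      rowOf p lam (k : ℕ) = (i : ℕ) ∧ tD k = j).card = D j i)
    (a : Fin n → Fin p) (σ : Equiv.Perm (Fin n)) :
    (if Dmat a (fun k => tLam n p hp lam (σ⁻¹ k)) = D then (1 : ℂ) else 0)
    = ∑ t' ∈ Finset.univ.filter (fun t' : Fin n → Fin p =>
          ∃ π ∈ rowGroup n p lam, t' = fun k => tD (π⁻¹ k)),
        (if a = fun k => t' (σ⁻¹ k) then (1 : ℂ) else 0) := by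
  have h1 : ∀ t' : Fin n → Fin p,
      (a = fun k => t' (σ⁻¹ k)) ↔ t' = fun m => a (σ m) := by
    intro t'
    constructor
    · intro h
      funext m
      have := congrFun h (σ m)
      rw [Equiv.Perm.inv_def, Equiv.symm_apply_apply] at this
      exact this.symm
    · rintro rfl
      funext k
      show a k = a (σ (σ⁻¹ k))
      rw [Equiv.Perm.inv_def, Equiv.apply_symm_apply]
  rw [Finset.sum_congr rfl (fun t' _ => by rw [if_congr (h1 t') rfl rfl]),
    Finset.sum_ite_eq' _ (fun m => a (σ m)) (fun _ => (1 : ℂ))]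
  apply if_congr _ rfl rfl
  rw [Finset.mem_filter]
  constructor
  · intro hDm
    have hcnts : ∀ i j, cnt n p lam (fun m => a (σ m)) i j = D i j := by
      intro i j
      rw [← Dmat_shift hp lam hsum a σ i j, hDm]
    exact ⟨Finset.mem_univ _, (counts_iff hp lam hsum D tD htD _).1 hcnts⟩
  · rintro ⟨-, hex⟩
    have hcnts := (counts_iff hp lam hsum D tD htD _).2 hex
    apply Matrix.ext
    intro i j
    rw [Dmat_shift hp lam hsum a σ i j, hcnts i j]

/-- if the vector of column sums `λ' = Dᵀ𝟙` of `D` equals `λ`, then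
`A_D e_λ = e_{t(D)}`, where `t(D)` is the tableau of shape `λ` whose `i`-th row contains
exactly `D_{j,i}` entries equal to `j` and whose rows are non-decreasing;
otherwise `A_D e_λ = 0`. -/
theorem stmt_4 (n p : ℕ) (hn : 1 ≤ n) (hp : 0 < p) (lam : Fin p → ℕ)
    (hdec : ∀ i j : Fin p, i ≤ j → lam j ≤ lam i) (hsum : ∑ i, lam i = n)
    (D : Matrix (Fin p) (Fin p) ℕ) (hD : ∑ i, ∑ j, D i j = n) :
    ((∀ i : Fin p, ∑ j, D j i = lam i) →
      (∃ tD : Fin n → Fin p,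
        (∀ k k' : Fin n, rowOf p lam (k : ℕ) = rowOf p lam (k' : ℕ) → (k : ℕ) ≤ (k' : ℕ) →
          tD k ≤ tD k') ∧
        (∀ j i : Fin p, (Finset.univ.filter fun k : Fin n =>
          rowOf p lam (k : ℕ) = (i : ℕ) ∧ tD k = j).card = D j i)) ∧
      (∀ tD : Fin n → Fin p,
        ((∀ k k' : Fin n, rowOf p lam (k : ℕ) = rowOf p lam (k' : ℕ) → (k : ℕ) ≤ (k' : ℕ) →
          tD k ≤ tD k') ∧
         (∀ j i : Fin p, (Finset.univ.filter fun k : Fin n =>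
          rowOf p lam (k : ℕ) = (i : ℕ) ∧ tD k = j).card = D j i)) →
        (AD n p D).mulVec (eLam n p hp lam) = eT n p lam tD)) ∧
    ((¬ ∀ i : Fin p, ∑ j, D j i = lam i) →
      (AD n p D).mulVec (eLam n p hp lam) = 0) := by
  have hrowi : ∀ k : Fin n, rowOf p lam (k : ℕ) = ((tLam n p hp lam k : Fin p) : ℕ) :=
    fun k => (tLam_val hp lam hsum k).symm
  have hcolb : ∀ k : Fin n,
      colOf p lam (k : ℕ) = (k : ℕ) - SS p lam ((tLam n p hp lam k : Fin p) : ℕ) := by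
    intro k
    show (k : ℕ) - SS p lam (rowOf p lam (k : ℕ)) = _
    rw [hrowi k]
  have hbounds : ∀ k : Fin n,
      SS p lam ((tLam n p hp lam k : Fin p) : ℕ) ≤ (k : ℕ) ∧
      (k : ℕ) < SS p lam ((tLam n p hp lam k : Fin p) : ℕ) + lam (tLam n p hp lam k) :=
    fun k => (rowOf_eq_iff lam (k : ℕ) (tLam n p hp lam k)).1 (hrowi k)
  have hcoflt : ∀ k : Fin n, colOf p lam (k : ℕ) < lam (tLam n p hp lam k) := by
    intro k
    rw [hcolb k]
    have := hbounds k
    omega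
  constructor
  · intro hcol
    constructor
    · -- existence of tD
      set tD : Fin n → Fin p := fun k =>
        ⟨rank p (fun j => D j (tLam n p hp lam k)) (colOf p lam (k : ℕ)) % p,
          Nat.mod_lt _ hp⟩ with htDdef
      have hwlt : ∀ k : Fin n,
          rank p (fun j => D j (tLam n p hp lam k)) (colOf p lam (k : ℕ)) < p := by
        intro k
        apply rank_lt_p hp
        rw [hcol (tLam n p hp lam k)]
        exact hcoflt k
      have htval : ∀ k : Fin n,
          ((tD k : Fin p) : ℕ)
          = rank p (fun j => D j (tLam n p hp lam k)) (colOf p lam (k : ℕ)) := by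
        intro k
        show (rank p (fun j => D j (tLam n p hp lam k)) (colOf p lam (k : ℕ)) % p) = _
        exact Nat.mod_eq_of_lt (hwlt k)
      refine ⟨tD, ?_, ?_⟩
      · -- monotone on rows
        intro k k' hrr hkk
        have hteq : tLam n p hp lam k = tLam n p hp lam k' := by
          apply Fin.ext
          rw [← hrowi k, ← hrowi k', hrr]
        rw [Fin.le_def, htval k, htval k', hteq]
        apply rank_mono
        rw [hcolb k, hcolb k', hteq]
        exact Nat.sub_le_sub_right hkk _
      · -- counts
        intro j i
        set w : Fin p → ℕ := fun j' => D j' i with hw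
        have hwsum : ∑ j', w j' = lam i := hcol i
        have hQle : SS p w ((j : ℕ) + 1) ≤ lam i := by
          calc SS p w ((j : ℕ) + 1) ≤ ∑ j', w j' := SS_le_sum _ _
          _ = lam i := hwsum
        have hss : SS p w ((j : ℕ) + 1) = SS p w (j : ℕ) + w j := SS_succ w j
        have hlamb : SS p lam (i : ℕ) + lam i ≤ n := by
          have h1 : SS p lam ((i : ℕ) + 1) ≤ ∑ j', lam j' := SS_le_sum _ _
          have h2 := SS_succ lam i
          omega
        have hiff : ∀ k : Fin n,
            (rowOf p lam (k : ℕ) = (i : ℕ) ∧ tD k = j) ↔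
            (SS p lam (i : ℕ) + SS p w (j : ℕ) ≤ (k : ℕ) ∧
              (k : ℕ) < SS p lam (i : ℕ) + SS p w (j : ℕ) + w j) := by
          intro k
          constructor
          · rintro ⟨hr, ht⟩
            have hti : tLam n p hp lam k = i := (tLam_eq_iff hp lam hsum k i).2 hr
            have hv : rank p w (colOf p lam (k : ℕ)) = (j : ℕ) := by
              have h0 := htval k
              rw [ht, hti] at h0
              exact h0.symm
            have hcb := (rank_eq_iff w _ j).1 hv
            have hkb := hbounds k
            have hcolk : colOf p lam (k : ℕ) = (k : ℕ) - SS p lam (i : ℕ) := by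
              rw [hcolb k, hti]
            rw [hti] at hkb
            omega
          · rintro ⟨h1, h2⟩
            have hr : rowOf p lam (k : ℕ) = (i : ℕ) := by
              rw [rowOf_eq_iff]
              omega
            have hti : tLam n p hp lam k = i := (tLam_eq_iff hp lam hsum k i).2 hr
            have hcolk : colOf p lam (k : ℕ) = (k : ℕ) - SS p lam (i : ℕ) := by
              rw [hcolb k, hti]
            have hv : rank p w (colOf p lam (k : ℕ)) = (j : ℕ) := by
              rw [rank_eq_iff]
              omega
            refine ⟨hr, ?_⟩
            apply Fin.ext
            rw [htval k, hti, hv]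
        have heq : (Finset.univ.filter fun k : Fin n =>
            rowOf p lam (k : ℕ) = (i : ℕ) ∧ tD k = j)
            = (Finset.univ.filter fun k : Fin n =>
              SS p lam (i : ℕ) + SS p w (j : ℕ) ≤ (k : ℕ) ∧
              (k : ℕ) < SS p lam (i : ℕ) + SS p w (j : ℕ) + w j) :=
          Finset.filter_congr (fun k _ => hiff k)
        have hbn : SS p lam (i : ℕ) + SS p w (j : ℕ) + w j ≤ n := by omega
        rw [heq, card_Ico_filter _ _ hbn]
        have : w j = D j i := rfl
        omega
    · rintro tD ⟨hmono, hcnt⟩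
      funext a
      rw [mulVec_eLam hp lam hsum D a, eT_apply lam tD a]
      apply Finset.sum_congr rfl
      intro σ _
      rw [key_sigma hp lam hsum D tD hcnt a σ]
  · intro hne
    funext a
    rw [mulVec_eLam hp lam hsum D a]
    show _ = (0 : ℂ)
    apply Finset.sum_eq_zero
    intro σ _
    rw [if_neg, mul_zero]
    intro hDm
    apply hne
    intro i
    rw [← cnt_col_sum hp lam hsum (fun m => a (σ m)) i]
    apply Finset.sum_congr rfl
    intro j _
    rw [← Dmat_shift hp lam hsum a σ j i, hDm]
end
end

section
/- For all i ≠ j in [p] and all D ∈ P(n,p): A_D · A_{i→j} = Σ_{k : D_{k,i} > 0} (D_{k,j} + 1) · A_{D − E_{k,i} + E_{k,j}} and A_{i→j} · A_D = Σ_{k : D_{j,k} > 0} (D_{i,k} + 1) · A_{D − E_{j,k} + E_{i,k}}. -/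
open scoped Classical
open Matrix

noncomputable section

/-- The 0/1 matrix `A_{i→j}` with `(A_{i→j})_{a,b} = 1` iff `b` is obtained from `a` by
changing one symbol `i` into a `j` (at some position `k`, all other positions agreeing). -/
def Aarrow (n p : ℕ) (i j : Fin p) : Matrix (Fin n → Fin p) (Fin n → Fin p) ℂ :=
  Matrix.of fun a b =>
    if ∃ k, a k = i ∧ b k = j ∧ ∀ l, l ≠ k → a l = b l then 1 else 0

/-- The matrix unit `E_{k,l} ∈ ℕ^{p×p}`. -/
def Emat (p : ℕ) (k l : Fin p) : Matrix (Fin p) (Fin p) ℕ :=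
  Matrix.of fun r s => if r = k ∧ s = l then 1 else 0

lemma emat_apply' {p : ℕ} (u v r s : Fin p) :
    Emat p u v r s = if u = r ∧ v = s then 1 else 0 := by
  simp only [Emat, Matrix.of_apply]
  exact if_congr (and_congr eq_comm eq_comm) rfl rfl

lemma dmat_update_right {n p : ℕ} (a c : Fin n → Fin p) (k : Fin n) (x : Fin p) :
    Dmat a (Function.update c k x) + Emat p (a k) (c k) = Dmat a c + Emat p (a k) x := by
  ext r s
  simp only [Matrix.add_apply, Dmat, Matrix.of_apply, Finset.card_filter, emat_apply']
  rw [← Finset.sum_erase_add _ _ (Finset.mem_univ k), ← Finset.sum_erase_add _ _ (Finset.mem_univ k)]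
  have hs : ∀ l ∈ Finset.univ.erase k,
      (if a l = r ∧ Function.update c k x l = s then 1 else 0) = (if a l = r ∧ c l = s then (1:ℕ) else 0) := by
    intro l hl
    rw [Function.update_of_ne (Finset.ne_of_mem_erase hl)]
  rw [Finset.sum_congr rfl hs, Function.update_self]
  by_cases h1 : a k = r ∧ x = s <;> by_cases h2 : a k = r ∧ c k = s <;>
    simp [h1, h2]
  · omega
  · omega

lemma dmat_update_left {n p : ℕ} (a c : Fin n → Fin p) (k : Fin n) (x : Fin p) :
    Dmat (Function.update a k x) c + Emat p (a k) (c k) = Dmat a c + Emat p x (c k) := by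
  ext r s
  simp only [Matrix.add_apply, Dmat, Matrix.of_apply, Finset.card_filter, emat_apply']
  rw [← Finset.sum_erase_add _ _ (Finset.mem_univ k), ← Finset.sum_erase_add _ _ (Finset.mem_univ k)]
  have hs : ∀ l ∈ Finset.univ.erase k,
      (if Function.update a k x l = r ∧ c l = s then 1 else 0) = (if a l = r ∧ c l = s then (1:ℕ) else 0) := by
    intro l hl
    rw [Function.update_of_ne (Finset.ne_of_mem_erase hl)]
  rw [Finset.sum_congr rfl hs, Function.update_self]
  by_cases h1 : x = r ∧ c k = s <;> by_cases h2 : a k = r ∧ c k = s <;>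
    simp [h1, h2]
  · omega
  · omega

lemma key {p : ℕ} (D M M' : Matrix (Fin p) (Fin p) ℕ) (u1 u2 v1 v2 : Fin p)
    (huv : ¬(u1 = v1 ∧ u2 = v2))
    (h : M' + Emat p u1 u2 = M + Emat p v1 v2) :
    M' = D ↔ 0 < D v1 v2 ∧ M = D - Emat p v1 v2 + Emat p u1 u2 := by
  have h' : ∀ r s, M' r s + (if r = u1 ∧ s = u2 then 1 else 0) =
      M r s + (if r = v1 ∧ s = v2 then 1 else 0) := by
    intro r s
    have := congrFun (congrFun h r) s
    simpa [Matrix.add_apply, Emat] using this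
  constructor
  · rintro rfl
    have hpos : 0 < M' v1 v2 := by
      have hh := h' v1 v2
      rw [if_neg (fun hc => huv ⟨hc.1.symm, hc.2.symm⟩), if_pos ⟨rfl, rfl⟩] at hh
      omega
    refine ⟨hpos, ?_⟩
    ext r s
    have hh := h' r s
    simp only [Matrix.sub_apply, Matrix.add_apply, Emat, Matrix.of_apply]
    by_cases h1 : r = v1 ∧ s = v2 <;> by_cases h2 : r = u1 ∧ s = u2
    · exact absurd ⟨h2.1.symm.trans h1.1, h2.2.symm.trans h1.2⟩ huv
    · rw [if_pos h1, if_neg h2] at hh ⊢; omega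
    · rw [if_neg h1, if_pos h2] at hh ⊢; omega
    · rw [if_neg h1, if_neg h2] at hh ⊢; omega
  · rintro ⟨hpos, rfl⟩
    ext r s
    have hh := h' r s
    simp only [Matrix.sub_apply, Matrix.add_apply, Emat, Matrix.of_apply] at hh
    by_cases h1 : r = v1 ∧ s = v2 <;> by_cases h2 : r = u1 ∧ s = u2
    · exact absurd ⟨h2.1.symm.trans h1.1, h2.2.symm.trans h1.2⟩ huv
    · have hp : 0 < D r s := by rw [h1.1, h1.2]; exact hpos
      rw [if_pos h1, if_neg h2] at hh
      omega
    · rw [if_neg h1, if_pos h2] at hh; omega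
    · rw [if_neg h1, if_neg h2] at hh; omega

lemma count1 {n p : ℕ} (i j : Fin p) (hij : i ≠ j) (D : Matrix (Fin p) (Fin p) ℕ)
    (a c : Fin n → Fin p) :
    (Finset.univ.filter fun b : Fin n → Fin p =>
        Dmat a b = D ∧ ∃ k, b k = i ∧ c k = j ∧ ∀ l, l ≠ k → b l = c l).card =
    ∑ k' ∈ Finset.univ.filter (fun k' : Fin p => 0 < D k' i),
      (D k' j + 1) * (if Dmat a c = D - Emat p k' i + Emat p k' j then 1 else 0) := by
  have hST : (Finset.univ.filter fun k : Fin n =>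
      c k = j ∧ Dmat a (Function.update c k i) = D).card =
      (Finset.univ.filter fun b : Fin n → Fin p =>
        Dmat a b = D ∧ ∃ k, b k = i ∧ c k = j ∧ ∀ l, l ≠ k → b l = c l).card := by
    refine Finset.card_bij (fun k _ => Function.update c k i) ?_ ?_ ?_
    · intro k hk
      rw [Finset.mem_filter] at hk ⊢
      refine ⟨Finset.mem_univ _, hk.2.2, k, Function.update_self _ _ _, hk.2.1,
        fun l hl => Function.update_of_ne hl _ _⟩
    · intro k1 h1 k2 h2 he
      by_contra hne
      rw [Finset.mem_filter] at h1 h2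
      have hth : Function.update c k1 i k1 = Function.update c k2 i k1 := congrFun he k1
      rw [Function.update_self, Function.update_of_ne hne] at hth
      exact hij (hth.trans h1.2.1)
    · intro b hb
      rw [Finset.mem_filter] at hb
      obtain ⟨-, hDb, k, hbk, hck, hoth⟩ := hb
      have hb' : Function.update c k i = b := by
        funext l
        by_cases hl : l = k
        · subst hl; rw [Function.update_self, hbk]
        · rw [Function.update_of_ne hl, (hoth l hl).symm]
      refine ⟨k, ?_, hb'⟩
      rw [Finset.mem_filter]
      exact ⟨Finset.mem_univ _, hck, by rw [hb']; exact hDb⟩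
  rw [← hST]
  rw [Finset.card_eq_sum_card_fiberwise (f := a) (t := Finset.univ) (fun x _ => Finset.mem_univ _)]
  have step3 : ∀ k' : Fin p,
      ((Finset.univ.filter fun k : Fin n =>
        c k = j ∧ Dmat a (Function.update c k i) = D).filter fun k => a k = k').card =
      if 0 < D k' i ∧ Dmat a c = D - Emat p k' i + Emat p k' j then D k' j + 1 else 0 := by
    intro k'
    have hiff : ∀ k : Fin n, ((c k = j ∧ Dmat a (Function.update c k i) = D) ∧ a k = k') ↔
        ((a k = k' ∧ c k = j) ∧
          (0 < D k' i ∧ Dmat a c = D - Emat p k' i + Emat p k' j)) := by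
      intro k
      constructor
      · rintro ⟨⟨hc, hd⟩, ha⟩
        refine ⟨⟨ha, hc⟩, ?_⟩
        have h := dmat_update_right a c k i
        rw [ha, hc] at h
        exact (key D (Dmat a c) _ k' j k' i (fun hh => hij hh.2.symm) h).1 hd
      · rintro ⟨⟨ha, hc⟩, hcond⟩
        refine ⟨⟨hc, ?_⟩, ha⟩
        have h := dmat_update_right a c k i
        rw [ha, hc] at h
        exact (key D (Dmat a c) _ k' j k' i (fun hh => hij hh.2.symm) h).2 hcond
    rw [Finset.filter_filter, Finset.filter_congr (fun k _ => hiff k)]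
    by_cases hcond : 0 < D k' i ∧ Dmat a c = D - Emat p k' i + Emat p k' j
    · rw [if_pos hcond]
      have he : (Finset.univ.filter fun k : Fin n => (a k = k' ∧ c k = j) ∧
          (0 < D k' i ∧ Dmat a c = D - Emat p k' i + Emat p k' j)) =
          Finset.univ.filter fun k : Fin n => a k = k' ∧ c k = j := by
        apply Finset.filter_congr
        intro k _
        simp [hcond]
      rw [he]
      have hcard : (Finset.univ.filter fun k : Fin n => a k = k' ∧ c k = j).card
          = Dmat a c k' j := rfl
      rw [hcard, hcond.2]
      simp [Matrix.sub_apply, Matrix.add_apply, Emat, Ne.symm hij]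
    · rw [if_neg hcond]
      simp [hcond]
  rw [Finset.sum_congr rfl (fun k' _ => step3 k')]
  rw [Finset.sum_filter]
  apply Finset.sum_congr rfl
  intro k' _
  by_cases h1 : 0 < D k' i <;>
    by_cases h2 : Dmat a c = D - Emat p k' i + Emat p k' j <;>
    simp [h1, h2]

lemma count2 {n p : ℕ} (i j : Fin p) (hij : i ≠ j) (D : Matrix (Fin p) (Fin p) ℕ)
    (a c : Fin n → Fin p) :
    (Finset.univ.filter fun b : Fin n → Fin p =>
        (∃ k, a k = i ∧ b k = j ∧ ∀ l, l ≠ k → a l = b l) ∧ Dmat b c = D).card =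
    ∑ k' ∈ Finset.univ.filter (fun k' : Fin p => 0 < D j k'),
      (D i k' + 1) * (if Dmat a c = D - Emat p j k' + Emat p i k' then 1 else 0) := by
  have hST : (Finset.univ.filter fun k : Fin n =>
      a k = i ∧ Dmat (Function.update a k j) c = D).card =
      (Finset.univ.filter fun b : Fin n → Fin p =>
        (∃ k, a k = i ∧ b k = j ∧ ∀ l, l ≠ k → a l = b l) ∧ Dmat b c = D).card := by
    refine Finset.card_bij (fun k _ => Function.update a k j) ?_ ?_ ?_
    · intro k hk
      rw [Finset.mem_filter] at hk ⊢
      refine ⟨Finset.mem_univ _, ⟨k, hk.2.1, Function.update_self _ _ _,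
        fun l hl => (Function.update_of_ne hl _ _).symm⟩, hk.2.2⟩
    · intro k1 h1 k2 h2 he
      by_contra hne
      rw [Finset.mem_filter] at h1 h2
      have hth : Function.update a k1 j k1 = Function.update a k2 j k1 := congrFun he k1
      rw [Function.update_self, Function.update_of_ne hne] at hth
      exact hij ((hth.trans h1.2.1).symm)
    · intro b hb
      rw [Finset.mem_filter] at hb
      obtain ⟨-, ⟨k, hak, hbk, hoth⟩, hDb⟩ := hb
      have hb' : Function.update a k j = b := by
        funext l
        by_cases hl : l = k
        · subst hl; rw [Function.update_self, hbk]
        · rw [Function.update_of_ne hl, hoth l hl]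
      refine ⟨k, ?_, hb'⟩
      rw [Finset.mem_filter]
      exact ⟨Finset.mem_univ _, hak, by rw [hb']; exact hDb⟩
  rw [← hST]
  rw [Finset.card_eq_sum_card_fiberwise (f := c) (t := Finset.univ) (fun x _ => Finset.mem_univ _)]
  have step3 : ∀ k' : Fin p,
      ((Finset.univ.filter fun k : Fin n =>
        a k = i ∧ Dmat (Function.update a k j) c = D).filter fun k => c k = k').card =
      if 0 < D j k' ∧ Dmat a c = D - Emat p j k' + Emat p i k' then D i k' + 1 else 0 := by
    intro k'
    have hiff : ∀ k : Fin n, ((a k = i ∧ Dmat (Function.update a k j) c = D) ∧ c k = k') ↔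
        ((a k = i ∧ c k = k') ∧
          (0 < D j k' ∧ Dmat a c = D - Emat p j k' + Emat p i k')) := by
      intro k
      constructor
      · rintro ⟨⟨ha, hd⟩, hc⟩
        refine ⟨⟨ha, hc⟩, ?_⟩
        have h := dmat_update_left a c k j
        rw [ha, hc] at h
        exact (key D (Dmat a c) _ i k' j k' (fun hh => hij hh.1) h).1 hd
      · rintro ⟨⟨ha, hc⟩, hcond⟩
        refine ⟨⟨ha, ?_⟩, hc⟩
        have h := dmat_update_left a c k j
        rw [ha, hc] at h
        exact (key D (Dmat a c) _ i k' j k' (fun hh => hij hh.1) h).2 hcond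
    rw [Finset.filter_filter, Finset.filter_congr (fun k _ => hiff k)]
    by_cases hcond : 0 < D j k' ∧ Dmat a c = D - Emat p j k' + Emat p i k'
    · rw [if_pos hcond]
      have he : (Finset.univ.filter fun k : Fin n => (a k = i ∧ c k = k') ∧
          (0 < D j k' ∧ Dmat a c = D - Emat p j k' + Emat p i k')) =
          Finset.univ.filter fun k : Fin n => a k = i ∧ c k = k' := by
        apply Finset.filter_congr
        intro k _
        simp [hcond]
      rw [he]
      have hcard : (Finset.univ.filter fun k : Fin n => a k = i ∧ c k = k').card
          = Dmat a c i k' := rfl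
      rw [hcard, hcond.2]
      simp [Matrix.sub_apply, Matrix.add_apply, Emat, hij]
    · rw [if_neg hcond]
      simp [hcond]
  rw [Finset.sum_congr rfl (fun k' _ => step3 k')]
  rw [Finset.sum_filter]
  apply Finset.sum_congr rfl
  intro k' _
  by_cases h1 : 0 < D j k' <;>
    by_cases h2 : Dmat a c = D - Emat p j k' + Emat p i k' <;>
    simp [h1, h2]

/-- for `i ≠ j`,
`A_D A_{i→j} = Σ_{k : D_{k,i} > 0} (D_{k,j}+1) A_{D - E_{k,i} + E_{k,j}}` and
`A_{i→j} A_D = Σ_{k : D_{j,k} > 0} (D_{i,k}+1) A_{D - E_{j,k} + E_{i,k}}`. -/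
theorem stmt_8 (n p : ℕ) (hn : 1 ≤ n) (hp : 1 ≤ p) (i j : Fin p) (hij : i ≠ j)
    (D : Matrix (Fin p) (Fin p) ℕ) (hD : ∑ r, ∑ s, D r s = n) :
    (AD n p D * Aarrow n p i j =
      ∑ k ∈ Finset.univ.filter (fun k : Fin p => 0 < D k i),
        ((D k j + 1 : ℕ) : ℂ) • AD n p (D - Emat p k i + Emat p k j)) ∧
    (Aarrow n p i j * AD n p D =
      ∑ k ∈ Finset.univ.filter (fun k : Fin p => 0 < D j k),
        ((D i k + 1 : ℕ) : ℂ) • AD n p (D - Emat p j k + Emat p i k)) := by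
  constructor
  · ext a c
    rw [Matrix.mul_apply]
    have hterm : ∀ b, AD n p D a b * Aarrow n p i j b c =
        if (Dmat a b = D ∧ ∃ k, b k = i ∧ c k = j ∧ ∀ l, l ≠ k → b l = c l) then (1:ℂ) else 0 := by
      intro b
      simp only [AD, Aarrow, Matrix.of_apply]
      by_cases h1 : Dmat a b = D <;>
        by_cases h2 : ∃ k, b k = i ∧ c k = j ∧ ∀ l, l ≠ k → b l = c l <;>
        simp [h1, h2]
    rw [Finset.sum_congr rfl (fun b _ => hterm b), Finset.sum_boole, count1 i j hij D a c]
    rw [Matrix.sum_apply]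
    push_cast
    apply Finset.sum_congr rfl
    intro k' _
    simp only [Matrix.smul_apply, AD, Matrix.of_apply, smul_eq_mul]
  · ext a c
    rw [Matrix.mul_apply]
    have hterm : ∀ b, Aarrow n p i j a b * AD n p D b c =
        if ((∃ k, a k = i ∧ b k = j ∧ ∀ l, l ≠ k → a l = b l) ∧ Dmat b c = D) then (1:ℂ) else 0 := by
      intro b
      simp only [AD, Aarrow, Matrix.of_apply]
      by_cases h1 : ∃ k, a k = i ∧ b k = j ∧ ∀ l, l ≠ k → a l = b l <;>
        by_cases h2 : Dmat b c = D <;>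
        simp [h1, h2]
    rw [Finset.sum_congr rfl (fun b _ => hterm b), Finset.sum_boole, count2 i j hij D a c]
    rw [Matrix.sum_apply]
    push_cast
    apply Finset.sum_congr rfl
    intro k' _
    simp only [Matrix.smul_apply, AD, Matrix.of_apply, smul_eq_mul]
end
end

section
/- Let D ∈ P(n,p) be lower triangular (D_{i,j} = 0 whenever i < j) and let μ := D^T·𝟙 be its vector of column sums. Then (∏_{i>j} D_{i,j}!) · A_D = (∏_{j=1}^{p−1} ∏_{i=j+1}^{p} A_{i→j}^{D_{i,j}}) · I_μ, where the (non-commuting) double product is taken left to right with the pairs (j,i) in lexicographic order (j increasing, and for fixed j, i increasing), and I_μ := A_{μ_1 E_{1,1} + ⋯ + μ_p E_{p,p}}. -/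
open scoped Classical
open Matrix

noncomputable section

/-- The ordered (noncommutative) product `∏_{j=1}^{p-1} ∏_{i=j+1}^{p} A_{i→j}^{D_{i,j}}`,
with the pairs `(j,i)` taken left to right in lexicographic order. -/
noncomputable def arrowProd (n p : ℕ) (D : Matrix (Fin p) (Fin p) ℕ) :
    Matrix (Fin n → Fin p) (Fin n → Fin p) ℂ :=
  ((List.finRange p).map fun j =>
    (((List.finRange p).filter fun i => decide (j < i)).map fun i =>
      Aarrow n p i j ^ D i j).prod).prod

variable {n p : ℕ}

def chg (i j : Fin p) (a b : Fin n → Fin p) : Finset (Fin n) :=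
  Finset.univ.filter fun k => a k = i ∧ b k = j

/-- condition for A_{i→j}^m -/
def pcond (i j : Fin p) (m : ℕ) (a b : Fin n → Fin p) : Prop :=
  (∀ k, b k = a k ∨ (a k = i ∧ b k = j)) ∧ (chg i j a b).card = m

lemma arrow_iff (i j : Fin p) (a c : Fin n → Fin p) :
    (∃ k, a k = i ∧ c k = j ∧ ∀ l, l ≠ k → a l = c l) ↔
      ∃ k, a k = i ∧ c = Function.update a k j := by
  constructor
  · rintro ⟨k, h1, h2, h3⟩
    exact ⟨k, h1, funext fun l => by
      rcases eq_or_ne l k with rfl | hl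
      · simp [h2]
      · simp [Function.update_of_ne hl, (h3 l hl).symm]⟩
  · rintro ⟨k, h1, rfl⟩
    exact ⟨k, h1, by simp, fun l hl => by simp [Function.update_of_ne hl]⟩

lemma step_sum (i j : Fin p) (hij : i ≠ j) (a : Fin n → Fin p)
    (g : (Fin n → Fin p) → ℂ) :
    ∑ c, (Aarrow n p i j) a c * g c =
      ∑ k ∈ Finset.univ.filter (fun k => a k = i), g (Function.update a k j) := by
  have himg : ∀ c, (Aarrow n p i j) a c =
      if c ∈ (Finset.univ.filter (fun k => a k = i)).image (fun k => Function.update a k j)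
      then 1 else 0 := by
    intro c
    simp only [Aarrow, Matrix.of_apply, arrow_iff, Finset.mem_image, Finset.mem_filter,
      Finset.mem_univ, true_and]
    congr 1
    · simp only [eq_iff_iff]
      constructor
      · rintro ⟨k, h1, rfl⟩; exact ⟨k, h1, rfl⟩
      · rintro ⟨k, h1, rfl⟩; exact ⟨k, h1, rfl⟩
  simp only [himg, ite_mul, one_mul, zero_mul]
  rw [Finset.sum_ite_mem, Finset.univ_inter]
  refine Finset.sum_image ?_
  intro k hk k' hk' h
  by_contra hne
  have := congrFun h k
  beta_reduce at this
  rw [Function.update_self, Function.update_of_ne hne] at this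
  exact hij (((Finset.mem_filter.mp hk).2.symm.trans this.symm))

lemma chg_update (i j : Fin p) (hij : i ≠ j) (a b : Fin n → Fin p) (k : Fin n) :
    chg i j (Function.update a k j) b = (chg i j a b).erase k := by
  ext l
  simp only [chg, Finset.mem_filter, Finset.mem_univ, true_and, Finset.mem_erase]
  rcases eq_or_ne l k with rfl | hl
  · simp [Function.update_self, hij.symm]
  · simp [Function.update_of_ne hl, hl]

lemma pcond_update (i j : Fin p) (hij : i ≠ j) (m : ℕ) (a b : Fin n → Fin p)
    (k : Fin n) (hk : a k = i) :
    pcond i j m (Function.update a k j) b ↔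
      pcond i j (m+1) a b ∧ k ∈ chg i j a b := by
  constructor
  · rintro ⟨h1, h2⟩
    have hbk : b k = j := by
      rcases h1 k with h | h
      · rw [h, Function.update_self]
      · exact h.2
    have hkc : k ∈ chg i j a b := by
      simp [chg, hk, hbk]
    refine ⟨⟨fun l => ?_, ?_⟩, hkc⟩
    · rcases eq_or_ne l k with rfl | hl
      · exact Or.inr ⟨hk, hbk⟩
      · rcases h1 l with h | h
        · rw [h, Function.update_of_ne hl]; exact Or.inl rfl
        · rw [Function.update_of_ne hl] at h; exact Or.inr h
    · rw [chg_update i j hij a b k] at h2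
      rw [← Finset.card_erase_add_one hkc, h2]
  · rintro ⟨⟨h1, h2⟩, hkc⟩
    have hbk : b k = j := by
      simp only [chg, Finset.mem_filter] at hkc; exact hkc.2.2
    refine ⟨fun l => ?_, ?_⟩
    · rcases eq_or_ne l k with rfl | hl
      · exact Or.inl (by rw [hbk, Function.update_self])
      · rcases h1 l with h | h
        · rw [Function.update_of_ne hl]; exact Or.inl h
        · rw [Function.update_of_ne hl]; exact Or.inr h
    · rw [chg_update i j hij a b k, Finset.card_erase_of_mem hkc, h2]
      omega

lemma pow_entry (i j : Fin p) (hij : i ≠ j) (m : ℕ) (a b : Fin n → Fin p) :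
    (Aarrow n p i j ^ m) a b =
      if pcond i j m a b then (m.factorial : ℂ) else 0 := by
  induction m generalizing a with
  | zero =>
    rw [pow_zero]
    rcases eq_or_ne a b with rfl | hab
    · have : pcond i j 0 a a := by
        refine ⟨fun k => Or.inl rfl, ?_⟩
        rw [Finset.card_eq_zero]
        ext k; simp only [chg, Finset.mem_filter, Finset.notMem_empty, iff_false]
        rintro ⟨_, h1, h2⟩; exact hij (h1.symm.trans h2)
      simp [Matrix.one_apply, this]
    · have : ¬ pcond i j 0 a b := by
        rintro ⟨h1, h2⟩
        rw [Finset.card_eq_zero] at h2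
        apply hab
        funext k
        rcases h1 k with h | h
        · exact h.symm
        · exfalso
          have : k ∈ chg i j a b := by simp [chg, h.1, h.2]
          simp [h2] at this
      simp [Matrix.one_apply, hab, this]
  | succ m ih =>
    rw [pow_succ', Matrix.mul_apply]
    simp only [ih]
    rw [step_sum i j hij a]
    have key : ∀ k ∈ Finset.univ.filter (fun k => a k = i),
        (if pcond i j m (Function.update a k j) b then (m.factorial : ℂ) else 0) =
        (if pcond i j (m+1) a b ∧ k ∈ chg i j a b then (m.factorial : ℂ) else 0) := by
      intro k hk
      exact if_congr (pcond_update i j hij m a b k (Finset.mem_filter.mp hk).2) rfl rfl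
    rw [Finset.sum_congr rfl key]
    by_cases hP : pcond i j (m+1) a b
    · simp only [hP, true_and, if_true]
      have hsub : chg i j a b ⊆ Finset.univ.filter (fun k => a k = i) := by
        intro k hk
        simp only [chg, Finset.mem_filter] at hk ⊢
        exact ⟨hk.1, hk.2.1⟩
      rw [← Finset.sum_filter]
      have : Finset.filter (fun k => k ∈ chg i j a b) (Finset.univ.filter fun k => a k = i)
          = chg i j a b := by
        ext k
        constructor
        · intro h; exact (Finset.mem_filter.mp h).2
        · intro h; exact Finset.mem_filter.mpr ⟨hsub h, h⟩
      rw [this, Finset.sum_const, hP.2]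
      push_cast [Nat.factorial_succ]
      ring
    · simp [hP]

def condL (D : Matrix (Fin p) (Fin p) ℕ) (L : List (Fin p × Fin p))
    (a b : Fin n → Fin p) : Prop :=
  (∀ k, a k = b k ∨ (b k, a k) ∈ L) ∧
    ∀ q ∈ L, (chg q.2 q.1 a b).card = D q.2 q.1

def cfun (i j : Fin p) (a b : Fin n → Fin p) : Fin n → Fin p :=
  fun k => if a k = i ∧ b k = j then j else a k

lemma key_count (D : Matrix (Fin p) (Fin p) ℕ) (j i : Fin p) (hji : j < i)
    (L : List (Fin p × Fin p)) (hq : (j, i) ∉ L)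
    (hne : ∀ q' ∈ L, q'.2 ≠ j) (a b : Fin n → Fin p) :
    Finset.univ.filter (fun c => pcond i j (D i j) a c ∧ condL D L c b) =
      if condL D ((j, i) :: L) a b then {cfun i j a b} else ∅ := by
  have hij : i ≠ j := hji.ne'
  ext c
  simp only [Finset.mem_filter, Finset.mem_univ, true_and]
  constructor
  · rintro ⟨hpc, hcl⟩
    -- changed positions end at j
    have claim0 : ∀ k, a k = i → c k = j → b k = j := by
      intro k hak hck
      rcases hcl.1 k with h | h
      · rw [← h, hck]
      · exact absurd hck (hne _ h)
    have claim1 : ∀ k, a k = i → b k = j → c k = j := by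
      intro k hak hbk
      rcases hpc.1 k with h | h
      · exfalso
        rcases hcl.1 k with h' | h'
        · exact hij ((hak.symm.trans h.symm).trans (h'.trans hbk))
        · have : ((j, i) : Fin p × Fin p) ∈ L := by rw [← hbk, ← h.trans hak]; exact h'
          exact hq this
      · exact h.2
    have claim2 : ∀ k, ¬(a k = i ∧ b k = j) → c k = a k := by
      intro k hk
      rcases hpc.1 k with h | h
      · exact h
      · exact absurd ⟨h.1, claim0 k h.1 h.2⟩ hk
    have hcondL : condL D ((j, i) :: L) a b := by
      constructor
      · intro k
        rcases hpc.1 k with h | h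
        · rcases hcl.1 k with h' | h'
          · exact Or.inl (h.symm.trans h')
          · rw [h] at h'
            exact Or.inr (List.mem_cons_of_mem _ h')
        · have hbk : b k = j := claim0 k h.1 h.2
          refine Or.inr ?_
          rw [hbk, h.1]
          exact List.mem_cons_self
      · rintro ⟨j', i'⟩ hq'
        rcases List.mem_cons.mp hq' with h | h
        · have hj' : j' = j := congrArg Prod.fst h
          have hi' : i' = i := congrArg Prod.snd h
          rw [hi', hj']
          have hset : chg i j a b = chg i j a c := by
            ext k
            simp only [chg, Finset.mem_filter, Finset.mem_univ, true_and]
            exact ⟨fun hk => ⟨hk.1, claim1 k hk.1 hk.2⟩,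
              fun hk => ⟨hk.1, claim0 k hk.1 hk.2⟩⟩
          rw [hset]
          exact hpc.2
        · have hset : chg i' j' a b = chg i' j' c b := by
            ext k
            simp only [chg, Finset.mem_filter, Finset.mem_univ, true_and]
            constructor
            · rintro ⟨hak, hbk⟩
              refine ⟨?_, hbk⟩
              have hk : ¬(a k = i ∧ b k = j) := by
                rintro ⟨hai, hbj⟩
                have : ((j', i') : Fin p × Fin p) = (j, i) := by
                  rw [← hak, ← hbk, hai, hbj]
                exact hq (this ▸ h)
              rw [claim2 k hk, hak]
            · rintro ⟨hck, hbk⟩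
              refine ⟨?_, hbk⟩
              rcases hpc.1 k with h' | h'
              · rw [← h', hck]
              · exact absurd (h'.2.symm.trans hck) (Ne.symm (hne _ h))
          rw [hset]
          exact hcl.2 _ h
    rw [if_pos hcondL, Finset.mem_singleton]
    funext k
    by_cases hk : a k = i ∧ b k = j
    · rw [show cfun i j a b k = j from if_pos hk]
      exact claim1 k hk.1 hk.2
    · rw [show cfun i j a b k = a k from if_neg hk]
      exact claim2 k hk
  · intro hc
    by_cases hcond : condL D ((j, i) :: L) a b
    · rw [if_pos hcond, Finset.mem_singleton] at hc
      subst hc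
      obtain ⟨h1, h2⟩ := hcond
      constructor
      · -- pcond i j (D i j) a cf
        constructor
        · intro k
          by_cases hk : a k = i ∧ b k = j
          · exact Or.inr ⟨hk.1, if_pos hk⟩
          · exact Or.inl (if_neg hk)
        · have hset : chg i j a (cfun i j a b) = chg i j a b := by
            ext k
            simp only [chg, Finset.mem_filter, Finset.mem_univ, true_and]
            constructor
            · rintro ⟨hak, hck⟩
              refine ⟨hak, ?_⟩
              by_cases hk : a k = i ∧ b k = j
              · exact hk.2
              · rw [show cfun i j a b k = a k from if_neg hk, hak] at hck
                exact absurd hck hij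
            · rintro ⟨hak, hbk⟩
              exact ⟨hak, if_pos ⟨hak, hbk⟩⟩
          rw [hset]
          exact h2 (j, i) (List.mem_cons_self)
      · -- condL D L cf b
        constructor
        · intro k
          by_cases hk : a k = i ∧ b k = j
          · exact Or.inl ((if_pos hk).trans hk.2.symm)
          · rw [show cfun i j a b k = a k from if_neg hk]
            rcases h1 k with h | h
            · exact Or.inl h
            · rcases List.mem_cons.mp h with h' | h'
              · exfalso
                have hbk : b k = j := congrArg Prod.fst h'
                have hak : a k = i := congrArg Prod.snd h'
                exact hk ⟨hak, hbk⟩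
              · exact Or.inr h'
        · rintro ⟨j', i'⟩ hq'
          have hset : chg i' j' (cfun i j a b) b = chg i' j' a b := by
            ext k
            simp only [chg, Finset.mem_filter, Finset.mem_univ, true_and]
            constructor
            · rintro ⟨hck, hbk⟩
              refine ⟨?_, hbk⟩
              by_cases hk : a k = i ∧ b k = j
              · rw [show cfun i j a b k = j from if_pos hk] at hck
                exact absurd hck.symm (hne _ hq')
              · rw [show cfun i j a b k = a k from if_neg hk] at hck
                exact hck
            · rintro ⟨hak, hbk⟩
              refine ⟨?_, hbk⟩
              have hk : ¬(a k = i ∧ b k = j) := by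
                rintro ⟨hai, hbj⟩
                have : ((j', i') : Fin p × Fin p) = (j, i) := by
                  rw [← hak, ← hbk, hai, hbj]
                exact hq (this ▸ hq')
              rw [show cfun i j a b k = a k from if_neg hk]
              exact hak
          rw [hset]
          exact h2 (j', i') (List.mem_cons_of_mem _ hq')
    · rw [if_neg hcond] at hc
      exact absurd hc (Finset.notMem_empty c)


lemma list_prod_entry (D : Matrix (Fin p) (Fin p) ℕ) :
    ∀ L : List (Fin p × Fin p), (∀ q ∈ L, q.1 < q.2) → L.Nodup →
      L.Pairwise (fun q q' => q'.2 ≠ q.1) → ∀ a b : Fin n → Fin p,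
      ((L.map fun q => Aarrow n p q.2 q.1 ^ D q.2 q.1).prod) a b =
        if condL D L a b then (((L.map fun q => (D q.2 q.1).factorial).prod : ℕ) : ℂ)
        else 0 := by
  intro L
  induction L with
  | nil =>
    intro _ _ _ a b
    simp only [List.map_nil, List.prod_nil]
    have hiff : condL D [] a b ↔ a = b := by
      constructor
      · rintro ⟨h1, _⟩
        funext k
        rcases h1 k with h | h
        · exact h
        · simp at h
      · rintro rfl
        exact ⟨fun k => Or.inl rfl, fun q hq => absurd hq List.not_mem_nil⟩
    rw [Matrix.one_apply]
    by_cases hab : a = b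
    · rw [if_pos hab, if_pos (hiff.mpr hab)]
      simp
    · rw [if_neg hab, if_neg (fun h => hab (hiff.mp h))]
  | cons q L ih =>
    obtain ⟨j, i⟩ := q
    intro hlt hnd hpw a b
    have hji : j < i := hlt (j, i) (List.mem_cons_self)
    have hij : i ≠ j := hji.ne'
    have hq : (j, i) ∉ L := (List.nodup_cons.mp hnd).1
    have hne : ∀ q' ∈ L, q'.2 ≠ j := fun q' hq' => (List.pairwise_cons.mp hpw).1 q' hq'
    have hlt' : ∀ q' ∈ L, q'.1 < q'.2 := fun q' hq' => hlt q' (List.mem_cons_of_mem _ hq')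
    have hnd' : L.Nodup := (List.nodup_cons.mp hnd).2
    have hpw' : L.Pairwise (fun q q' => q'.2 ≠ q.1) := (List.pairwise_cons.mp hpw).2
    rw [List.map_cons, List.prod_cons, Matrix.mul_apply]
    have hrw : ∀ c, (Aarrow n p i j ^ D i j) a c *
        ((L.map fun q => Aarrow n p q.2 q.1 ^ D q.2 q.1).prod) c b =
        if pcond i j (D i j) a c ∧ condL D L c b then
          ((D i j).factorial : ℂ) * (((L.map fun q => (D q.2 q.1).factorial).prod : ℕ) : ℂ)
        else 0 := by
      intro c
      rw [pow_entry i j hij, ih hlt' hnd' hpw' c b, ite_mul, zero_mul, mul_ite, mul_zero,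
        ← ite_and]
    rw [Finset.sum_congr rfl fun c _ => hrw c, ← Finset.sum_filter,
      key_count D j i hji L hq hne a b]
    by_cases hcond : condL D ((j, i) :: L) a b
    · rw [if_pos hcond, if_pos hcond, Finset.sum_singleton]
      push_cast [List.map_cons, List.prod_cons]
      ring
    · rw [if_neg hcond, if_neg hcond, Finset.sum_empty]

def Llex (p : ℕ) : List (Fin p × Fin p) :=
  (List.finRange p).flatMap fun j =>
    ((List.finRange p).filter fun i => decide (j < i)).map fun i => (j, i)

lemma mem_Llex (q : Fin p × Fin p) : q ∈ Llex p ↔ q.1 < q.2 := by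
  obtain ⟨j, i⟩ := q
  constructor
  · intro hq
    obtain ⟨j', _, hq2⟩ := List.mem_flatMap.mp hq
    obtain ⟨i', hi, heq⟩ := List.mem_map.mp hq2
    have h := List.of_mem_filter hi
    have h1 : j' = j := congrArg Prod.fst heq
    have h2 : i' = i := congrArg Prod.snd heq
    rw [← h1, ← h2]
    simpa using h
  · intro h
    refine List.mem_flatMap.mpr ⟨j, List.mem_finRange _, ?_⟩
    refine List.mem_map.mpr ⟨i, ?_, rfl⟩
    exact List.mem_filter.mpr ⟨List.mem_finRange _, by simpa using h⟩

lemma flatMap_pairwise {α β : Type*} {R : β → β → Prop} (l : List α) (f : α → List β)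
    (h1 : ∀ a ∈ l, (f a).Pairwise R)
    (h2 : l.Pairwise fun a a' => ∀ x ∈ f a, ∀ y ∈ f a', R x y) :
    (l.flatMap f).Pairwise R := by
  induction l with
  | nil => simp
  | cons a l ih =>
    rw [List.flatMap_cons, List.pairwise_append]
    refine ⟨h1 a (List.mem_cons_self),
      ih (fun a' ha' => h1 a' (List.mem_cons_of_mem _ ha'))
        (List.pairwise_cons.mp h2).2, ?_⟩
    intro x hx y hy
    obtain ⟨a', ha', hyf⟩ := List.mem_flatMap.mp hy
    exact (List.pairwise_cons.mp h2).1 a' ha' x hx y hyf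

lemma Llex_pairwise_lex :
    (Llex p).Pairwise fun q q' => q.1 < q'.1 ∨ (q.1 = q'.1 ∧ q.2 < q'.2) := by
  refine flatMap_pairwise _ _ ?_ ?_
  · intro j _
    rw [List.pairwise_map]
    refine List.Pairwise.filter _ ?_
    exact (List.pairwise_lt_finRange p).imp fun h => Or.inr ⟨rfl, h⟩
  · refine (List.pairwise_lt_finRange p).imp ?_
    intro j j' hjj' x hx y hy
    obtain ⟨i, _, hxe⟩ := List.mem_map.mp hx
    obtain ⟨i', _, hye⟩ := List.mem_map.mp hy
    left
    rw [← hxe, ← hye]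
    exact hjj'

lemma Llex_nodup : (Llex p).Nodup := by
  refine Llex_pairwise_lex.imp ?_
  rintro ⟨j, i⟩ ⟨j', i'⟩ h heq
  rw [Prod.mk.injEq] at heq
  rcases h with h | ⟨_, h2⟩
  · exact absurd (heq.1 ▸ h) (lt_irrefl _)
  · exact absurd (heq.2 ▸ h2) (lt_irrefl _)

lemma Llex_pairwise : (Llex p).Pairwise fun q q' => q'.2 ≠ q.1 := by
  rw [List.pairwise_iff_forall_sublist]
  intro q q' hsub
  have hmem := hsub.subset
  have hq' : q' ∈ Llex p := hmem (List.mem_cons_of_mem _ (List.mem_cons_self))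
  have h2 := (mem_Llex q').mp hq'
  rcases List.pairwise_iff_forall_sublist.mp Llex_pairwise_lex hsub with hc | ⟨he, _⟩
  · exact (lt_trans hc h2).ne'
  · exact (he ▸ h2).ne'


lemma map_prod_flatMap {α β M : Type*} [Monoid M] (l : List α) (f : α → List β)
    (g : β → M) :
    ((l.flatMap f).map g).prod = (l.map fun x => ((f x).map g).prod).prod := by
  induction l with
  | nil => simp
  | cons x l ih => simp [List.flatMap_cons, ih]

lemma arrowProd_eq (D : Matrix (Fin p) (Fin p) ℕ) :
    arrowProd n p D = ((Llex p).map fun q => Aarrow n p q.2 q.1 ^ D q.2 q.1).prod := by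
  rw [Llex, map_prod_flatMap]
  unfold arrowProd
  simp only [List.map_map]
  rfl

lemma Llex_toFinset :
    (Llex p).toFinset = (Finset.univ : Finset (Fin p × Fin p)).filter fun q => q.1 < q.2 := by
  ext q
  simp [List.mem_toFinset, mem_Llex q]

lemma fact_prod_eq (D : Matrix (Fin p) (Fin p) ℕ) :
    (((Llex p).map fun q => (D q.2 q.1).factorial).prod) =
      ∏ ij ∈ (Finset.univ : Finset (Fin p × Fin p)).filter (fun ij => ij.2 < ij.1),
        (D ij.1 ij.2).factorial := by
  rw [← List.prod_toFinset _ Llex_nodup, Llex_toFinset]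
  refine Finset.prod_nbij' (fun q => Prod.swap q) (fun q => Prod.swap q) ?_ ?_ ?_ ?_ ?_
  · intro q hq
    simp only [Finset.mem_filter, Finset.mem_univ, true_and] at hq ⊢
    exact hq
  · intro q hq
    simp only [Finset.mem_filter, Finset.mem_univ, true_and] at hq ⊢
    exact hq
  · intro q _; exact Prod.swap_swap q
  · intro q _; exact Prod.swap_swap q
  · intro q _; rfl

lemma Dmat_diag_iff (μ : Fin p → ℕ) (c b : Fin n → Fin p) :
    Dmat c b = Matrix.diagonal μ ↔
      c = b ∧ ∀ r, (Finset.univ.filter fun k => b k = r).card = μ r := by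
  constructor
  · intro h
    have hcb : c = b := by
      funext k
      by_contra hk
      have h0 : (Dmat c b) (c k) (b k) = 0 := by
        rw [h, Matrix.diagonal_apply_ne _ hk]
      have h1 : 0 < (Dmat c b) (c k) (b k) := by
        simp only [Dmat, Matrix.of_apply]
        exact Finset.card_pos.mpr ⟨k, by simp⟩
      omega
    subst hcb
    refine ⟨rfl, fun r => ?_⟩
    have := congrFun (congrFun h r) r
    rw [Matrix.diagonal_apply_eq] at this
    rw [← this]
    simp only [Dmat, Matrix.of_apply]
    congr 1
    ext k
    simp
  · rintro ⟨rfl, hcont⟩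
    ext r s
    by_cases hrs : r = s
    · subst hrs
      rw [Matrix.diagonal_apply_eq]
      rw [← hcont r]
      simp only [Dmat, Matrix.of_apply]
      congr 1
      ext k
      simp
    · rw [Matrix.diagonal_apply_ne _ hrs]
      simp only [Dmat, Matrix.of_apply]
      rw [Finset.card_eq_zero]
      ext k
      simp only [Finset.mem_filter, Finset.notMem_empty, iff_false, Finset.mem_univ,
        true_and]
      rintro ⟨h1, h2⟩
      exact hrs (h1.symm.trans h2)

lemma content_eq (a b : Fin n → Fin p) (r : Fin p) :
    (Finset.univ.filter fun k => b k = r).card = ∑ i, (Dmat a b) i r := by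
  rw [Finset.card_eq_sum_card_fiberwise (f := a) (t := Finset.univ)
    (fun x _ => Finset.mem_univ _)]
  refine Finset.sum_congr rfl fun i _ => ?_
  rw [Finset.filter_filter]
  simp only [Dmat, Matrix.of_apply]
  congr 1
  ext k
  simp [and_comm]

/-- for lower triangular `D ∈ P(n,p)` with column-sum vector `μ = Dᵀ𝟙`,
`(∏_{i>j} D_{i,j}!) A_D = (∏_{j<i} A_{i→j}^{D_{i,j}}) I_μ`, where
`I_μ = A_{μ_1 E_{1,1} + ⋯ + μ_p E_{p,p}}`. -/
theorem stmt_9 (n p : ℕ) (hn : 1 ≤ n) (hp : 1 ≤ p)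
    (D : Matrix (Fin p) (Fin p) ℕ) (hD : ∑ r, ∑ s, D r s = n)
    (hlow : ∀ i j : Fin p, i < j → D i j = 0) :
    ((∏ ij ∈ (Finset.univ : Finset (Fin p × Fin p)).filter (fun ij => ij.2 < ij.1),
        (D ij.1 ij.2).factorial : ℕ) : ℂ) • AD n p D =
      arrowProd n p D * AD n p (Matrix.diagonal fun r => ∑ k, D k r) := by
  ext a b
  rw [Matrix.smul_apply, Matrix.mul_apply]
  have hIμ : ∀ c, AD n p (Matrix.diagonal fun r => ∑ k, D k r) c b =
      if c = b ∧ (∀ r, (Finset.univ.filter fun k => b k = r).card = ∑ k, D k r)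
      then 1 else 0 := by
    intro c
    simp only [AD, Matrix.of_apply]
    exact if_congr (Dmat_diag_iff _ c b) rfl rfl
  have hM : ∀ a, arrowProd n p D a b = if condL D (Llex p) a b
      then (((Llex p).map fun q => (D q.2 q.1).factorial).prod : ℂ) else 0 := by
    intro a
    rw [arrowProd_eq]
    exact list_prod_entry D (Llex p) (fun q hq => (mem_Llex q).mp hq)
      Llex_nodup Llex_pairwise a b
  simp only [hIμ]
  simp only [AD, Matrix.of_apply]
  by_cases hPb : ∀ r, (Finset.univ.filter fun k => b k = r).card = ∑ k, D k r
  · have hcongr : ∀ x : Fin n → Fin p,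
        (if x = b ∧ (∀ r, (Finset.univ.filter fun k => b k = r).card = ∑ k, D k r)
          then (1:ℂ) else 0) = if x = b then 1 else 0 :=
      fun x => if_congr (and_iff_left hPb) rfl rfl
    simp only [hcongr]
    have hsum : ∑ c, arrowProd n p D a c * (if c = b then (1:ℂ) else 0)
        = arrowProd n p D a b := by
      simp [mul_ite, mul_one, mul_zero, Finset.sum_ite_eq', Finset.mem_univ]
    rw [hsum, hM a]
    by_cases hab : Dmat a b = D
    · have hcond : condL D (Llex p) a b := by
        constructor
        · intro k
          rcases lt_trichotomy (a k) (b k) with h | h | h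
          · exfalso
            have h0 : D (a k) (b k) = 0 := hlow _ _ h
            have h1 : 0 < (Dmat a b) (a k) (b k) := by
              simp only [Dmat, Matrix.of_apply]
              exact Finset.card_pos.mpr ⟨k, by simp⟩
            rw [hab, h0] at h1
            exact lt_irrefl 0 h1
          · exact Or.inl h
          · exact Or.inr ((mem_Llex _).mpr h)
        · intro q hq
          have hrfl : (chg q.2 q.1 a b).card = Dmat a b q.2 q.1 := rfl
          rw [hrfl, hab]
      rw [if_pos hab, if_pos hcond, smul_eq_mul, mul_one, fact_prod_eq]
    · have hncond : ¬ condL D (Llex p) a b := by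
        intro hcond
        apply hab
        have hoff : ∀ i j : Fin p, j < i → Dmat a b i j = D i j := by
          intro i j h
          exact hcond.2 (j, i) ((mem_Llex _).mpr h)
        have hup : ∀ i j : Fin p, i < j → Dmat a b i j = 0 := by
          intro i j h
          simp only [Dmat, Matrix.of_apply]
          rw [Finset.card_eq_zero]
          ext k
          simp only [Finset.mem_filter, Finset.notMem_empty, iff_false,
            Finset.mem_univ, true_and]
          rintro ⟨h1, h2⟩
          rcases hcond.1 k with h' | h'
          · rw [h1, h2] at h'
            exact absurd h' h.ne
          · have := (mem_Llex _).mp h'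
            rw [h1, h2] at this
            exact absurd h (asymm this)
        have hdiag : ∀ i, Dmat a b i i = D i i := by
          intro i
          have hsum2 : ∑ r, Dmat a b r i = ∑ r, D r i := by
            rw [← content_eq a b i, hPb i]
          have herase : ∀ r ∈ Finset.univ.erase i, Dmat a b r i = D r i := by
            intro r hr
            have hne := Finset.ne_of_mem_erase hr
            rcases lt_or_gt_of_ne hne with h | h
            · rw [hup r i h, (hlow r i h).symm]
            · exact hoff r i h
          rw [← Finset.add_sum_erase _ _ (Finset.mem_univ i),
            ← Finset.add_sum_erase _ (fun r => D r i) (Finset.mem_univ i),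
            Finset.sum_congr rfl herase] at hsum2
          exact Nat.add_right_cancel hsum2
        ext i j
        rcases lt_trichotomy i j with h | h | h
        · rw [hup i j h, hlow i j h]
        · subst h; exact hdiag i
        · exact hoff i j h
      rw [if_neg hab, if_neg hncond, smul_zero]
  · have hcongr : ∀ x : Fin n → Fin p,
        (if x = b ∧ (∀ r, (Finset.univ.filter fun k => b k = r).card = ∑ k, D k r)
          then (1:ℂ) else 0) = 0 :=
      fun x => if_neg (fun h => hPb h.2)
    simp only [hcongr, mul_zero, Finset.sum_const_zero]
    have hab : Dmat a b ≠ D := by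
      intro hab
      apply hPb
      intro r
      rw [content_eq a b r, hab]
    rw [if_neg hab, smul_zero]
end
end

section
/- For all i ≠ j in [p] and every matrix A ∈ ℂ^{[p]^n×[p]^n}: f_{A_{i→j}·A} = d_{i→j}(f_A) and f_{A·A_{i→j}} = d*_{i→j}(f_A), where d_{i→j} := Σ_{s=1}^{p} x_{i,s} ∂/∂x_{j,s} and d*_{i→j} := Σ_{s=1}^{p} x_{s,j} ∂/∂x_{s,i} are differential operators on ℂ[x_{i,j} : i,j ∈ [p]]. -/
open scoped Classical
open Matrix

noncomputable section

/-- The polynomial `Q_k = k! · det((x_{i,j})_{1 ≤ i,j ≤ k})` in the variables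
`x_{i,j}`, `i,j ∈ [p]` (for `k ≤ p`; `Q_0 = 1`). -/
noncomputable def Qpoly (p k : ℕ) : MvPolynomial (Fin p × Fin p) ℂ :=
  (k.factorial : MvPolynomial (Fin p × Fin p) ℂ) *
    Matrix.det (Matrix.of fun i j : Fin k =>
      if h : (i : ℕ) < p ∧ (j : ℕ) < p then MvPolynomial.X (⟨i, h.1⟩, ⟨j, h.2⟩) else 0)

/-- The conjugate (dual) partition: `λ*_j = |{i : λ_i ≥ j}|`. -/
def conjPart (p : ℕ) (lam : Fin p → ℕ) (j : ℕ) : ℕ :=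
  (Finset.univ.filter fun i : Fin p => j ≤ lam i).card

/-- The polynomial `P_λ = ∏_{j=1}^n Q_{λ*_j}`. -/
noncomputable def Ppoly (n p : ℕ) (lam : Fin p → ℕ) : MvPolynomial (Fin p × Fin p) ℂ :=
  ∏ j ∈ Finset.range n, Qpoly p (conjPart p lam (j + 1))

/-- The exponent (as a finitely supported function on `Fin p × Fin p`) of the monomial
`x^D` attached to `D ∈ ℕ^{p×p}`. -/
noncomputable def expOf (p : ℕ) (D : Matrix (Fin p) (Fin p) ℕ) : (Fin p × Fin p) →₀ ℕ :=
  Finsupp.equivFunOnFinite.symm fun ij : Fin p × Fin p => D ij.1 ij.2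

/-- The polynomial `f_A = Σ_{D ∈ P(n,p)} x^D ⟨A_D, A⟩`, where `⟨M,N⟩ = trace(N^*M)`
(matrices `D ∈ P(n,p)` are encoded with entries in `Fin (n+1)`). -/
noncomputable def fPoly (n p : ℕ) (A : Matrix (Fin n → Fin p) (Fin n → Fin p) ℂ) :
    MvPolynomial (Fin p × Fin p) ℂ :=
  ∑ D ∈ (Finset.univ : Finset (Fin p → Fin p → Fin (n + 1))).filter
      (fun D => ∑ i, ∑ j, (D i j : ℕ) = n),
    MvPolynomial.monomial (expOf p (Matrix.of fun i j => (D i j : ℕ)))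
      (Matrix.trace (Aᴴ * AD n p (Matrix.of fun i j => (D i j : ℕ))))

/-- The differential operator `d_{i→j} = Σ_s x_{i,s} ∂/∂x_{j,s}`. -/
noncomputable def dOp (p : ℕ) (i j : Fin p) :
    MvPolynomial (Fin p × Fin p) ℂ → MvPolynomial (Fin p × Fin p) ℂ :=
  fun g => ∑ s : Fin p, MvPolynomial.X (i, s) * MvPolynomial.pderiv (j, s) g

/-- The differential operator `d*_{i→j} = Σ_s x_{s,j} ∂/∂x_{s,i}`. -/
noncomputable def dStarOp (p : ℕ) (i j : Fin p) :
    MvPolynomial (Fin p × Fin p) ℂ → MvPolynomial (Fin p × Fin p) ℂ :=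
  fun g => ∑ s : Fin p, MvPolynomial.X (s, j) * MvPolynomial.pderiv (s, i) g

section Aux

lemma expOf_apply {p : ℕ} (D : Matrix (Fin p) (Fin p) ℕ) (x : Fin p × Fin p) :
    expOf p D x = D x.1 x.2 := rfl

lemma sum_Dmat {n p : ℕ} (a b : Fin n → Fin p) : ∑ i, ∑ j, Dmat a b i j = n := by
  simp only [Dmat, Matrix.of_apply, Finset.card_filter]
  rw [Finset.sum_congr rfl fun i _ => Finset.sum_comm]
  rw [Finset.sum_comm]
  have h : ∀ k : Fin n, (∑ i : Fin p, ∑ j : Fin p, if a k = i ∧ b k = j then 1 else 0) = 1 := by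
    intro k
    have : ∀ i : Fin p, (∑ j : Fin p, if a k = i ∧ b k = j then 1 else 0)
        = if i = a k then 1 else 0 := by
      intro i
      by_cases h : i = a k
      · subst h; simp
      · simp [Ne.symm h, h]
    simp [this]
  simp only [Finset.card_filter, h]
  simp

lemma Dmat_lt {n p : ℕ} (a b : Fin n → Fin p) (i j : Fin p) : Dmat a b i j < n + 1 := by
  have : Dmat a b i j ≤ n := by
    simpa [Dmat] using (Finset.card_filter_le (Finset.univ : Finset (Fin n)) _).trans (by simp)
  omega

def enc {n p : ℕ} (a b : Fin n → Fin p) : Fin p → Fin p → Fin (n + 1) :=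
  fun i j => ⟨Dmat a b i j, Dmat_lt a b i j⟩

lemma of_enc {n p : ℕ} (a b : Fin n → Fin p) :
    (Matrix.of fun i j => ((enc a b i j : ℕ))) = Dmat a b := by
  ext i j; rfl

lemma fPoly_eq (n p : ℕ) (A : Matrix (Fin n → Fin p) (Fin n → Fin p) ℂ) :
    fPoly n p A = ∑ a : Fin n → Fin p, ∑ b : Fin n → Fin p,
      MvPolynomial.monomial (expOf p (Dmat a b)) ((starRingEnd ℂ) (A a b)) := by
  unfold fPoly
  have htr : ∀ D : Matrix (Fin p) (Fin p) ℕ,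
      Matrix.trace (Aᴴ * AD n p D) =
      ∑ b : Fin n → Fin p, ∑ a : Fin n → Fin p,
        (starRingEnd ℂ) (A a b) * (if Dmat a b = D then 1 else 0) := by
    intro D
    simp [Matrix.trace, Matrix.mul_apply, Matrix.conjTranspose_apply, AD, Matrix.diag]
  simp only [htr, map_sum]
  rw [Finset.sum_comm]
  rw [Finset.sum_congr rfl fun b _ => Finset.sum_comm]
  rw [Finset.sum_comm]
  refine Finset.sum_congr rfl fun a _ => Finset.sum_congr rfl fun b _ => ?_
  rw [Finset.sum_eq_single (enc a b)]
  · simp [of_enc]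
  · intro D hD hne
    have : Dmat a b ≠ Matrix.of fun i j => ((D i j : ℕ)) := by
      intro h
      apply hne
      funext i j
      have := congrFun (congrFun h.symm i) j
      exact Fin.ext this
    simp [this]
  · intro h
    exfalso
    apply h
    simp only [Finset.mem_filter, Finset.mem_univ, true_and]
    have := sum_Dmat a b
    simpa [enc] using this

lemma card_split {n p : ℕ} (k : Fin n) (c b : Fin n → Fin p) (r s : Fin p) :
    (Finset.univ.filter fun l => c l = r ∧ b l = s).card
      = (if c k = r ∧ b k = s then 1 else 0)
        + ∑ l ∈ Finset.univ.erase k, (if c l = r ∧ b l = s then 1 else 0) := by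
  rw [Finset.card_filter, ← Finset.add_sum_erase _ _ (Finset.mem_univ k)]

lemma expOf_update_left {n p : ℕ} {i j : Fin p} (hij : i ≠ j) (a b : Fin n → Fin p)
    (k : Fin n) (hk : a k = j) :
    expOf p (Dmat (Function.update a k i) b)
      = Finsupp.single (i, b k) 1 + (expOf p (Dmat a b) - Finsupp.single (j, b k) 1) := by
  ext x
  obtain ⟨r, s⟩ := x
  rw [Finsupp.add_apply, Finsupp.tsub_apply, expOf_apply, expOf_apply]
  simp only [Finsupp.single_apply, Dmat, Matrix.of_apply]
  rw [card_split k, card_split k]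
  have he : ∀ l ∈ Finset.univ.erase k,
      (if Function.update a k i l = r ∧ b l = s then 1 else 0)
        = (if a l = r ∧ b l = s then 1 else 0) := by
    intro l hl
    rw [Function.update_of_ne (Finset.ne_of_mem_erase hl)]
  rw [Finset.sum_congr rfl he, Function.update_self, hk]
  by_cases h1 : i = r ∧ b k = s <;> by_cases h2 : j = r ∧ b k = s
  · exact absurd (h1.1.trans h2.1.symm) hij
  · simp only [if_pos h1, if_neg h2, Prod.mk.injEq, if_pos h1, if_neg h2]
    omega
  · simp only [if_neg h1, if_pos h2, Prod.mk.injEq, if_neg h1, if_pos h2]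
    omega
  · simp only [if_neg h1, if_neg h2, Prod.mk.injEq]
    omega

lemma expOf_update_right {n p : ℕ} {i j : Fin p} (hij : i ≠ j) (a b : Fin n → Fin p)
    (k : Fin n) (hk : b k = i) :
    expOf p (Dmat a (Function.update b k j))
      = Finsupp.single (a k, j) 1 + (expOf p (Dmat a b) - Finsupp.single (a k, i) 1) := by
  ext x
  obtain ⟨r, s⟩ := x
  rw [Finsupp.add_apply, Finsupp.tsub_apply, expOf_apply, expOf_apply]
  simp only [Finsupp.single_apply, Dmat, Matrix.of_apply]
  rw [card_split k, card_split k]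
  have he : ∀ l ∈ Finset.univ.erase k,
      (if a l = r ∧ Function.update b k j l = s then 1 else 0)
        = (if a l = r ∧ b l = s then 1 else 0) := by
    intro l hl
    rw [Function.update_of_ne (Finset.ne_of_mem_erase hl)]
  rw [Finset.sum_congr rfl he, Function.update_self, hk]
  by_cases h1 : a k = r ∧ j = s <;> by_cases h2 : a k = r ∧ i = s
  · exact absurd (h2.2.trans h1.2.symm) hij
  · simp only [if_pos h1, if_neg h2, Prod.mk.injEq, if_pos h1, if_neg h2]
    omega
  · simp only [if_neg h1, if_pos h2, Prod.mk.injEq, if_neg h1, if_pos h2]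
    omega
  · simp only [if_neg h1, if_neg h2, Prod.mk.injEq]
    omega

lemma sum_update_left {n p : ℕ} {M : Type*} [AddCommMonoid M] {i j : Fin p} (hij : i ≠ j)
    (a : Fin n → Fin p) (f : (Fin n → Fin p) → M) :
    (∑ a' : Fin n → Fin p,
      if ∃ k, a' k = i ∧ a k = j ∧ ∀ l, l ≠ k → a' l = a l then f a' else 0)
      = ∑ k ∈ Finset.univ.filter (fun k => a k = j), f (Function.update a k i) := by
  rw [← Finset.sum_filter]
  refine (Finset.sum_bij (fun k hk => Function.update a k i) ?_ ?_ ?_ ?_).symm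
  · intro k hk
    simp only [Finset.mem_filter, Finset.mem_univ, true_and] at hk ⊢
    exact ⟨k, Function.update_self k i a, hk, fun l hl => Function.update_of_ne hl i a⟩
  · intro k1 hk1 k2 hk2 h
    simp only [Finset.mem_filter, Finset.mem_univ, true_and] at hk1 hk2
    by_contra hne
    have := congrFun h k1
    rw [Function.update_self, Function.update_of_ne hne] at this
    exact hij (this.trans hk1)
  · intro a' ha'
    simp only [Finset.mem_filter, Finset.mem_univ, true_and] at ha'
    obtain ⟨k, h1, h2, h3⟩ := ha'
    refine ⟨k, by simp [h2], ?_⟩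
    funext l
    by_cases hl : l = k
    · subst hl; rw [Function.update_self, h1]
    · rw [Function.update_of_ne hl, h3 l hl]
  · intro k hk; rfl

lemma sum_update_right {n p : ℕ} {M : Type*} [AddCommMonoid M] {i j : Fin p} (hij : i ≠ j)
    (b : Fin n → Fin p) (f : (Fin n → Fin p) → M) :
    (∑ b' : Fin n → Fin p,
      if ∃ k, b k = i ∧ b' k = j ∧ ∀ l, l ≠ k → b l = b' l then f b' else 0)
      = ∑ k ∈ Finset.univ.filter (fun k => b k = i), f (Function.update b k j) := by
  rw [← Finset.sum_filter]
  refine (Finset.sum_bij (fun k hk => Function.update b k j) ?_ ?_ ?_ ?_).symm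
  · intro k hk
    simp only [Finset.mem_filter, Finset.mem_univ, true_and] at hk ⊢
    exact ⟨k, hk, Function.update_self k j b,
      fun l hl => (Function.update_of_ne hl j b).symm⟩
  · intro k1 hk1 k2 hk2 h
    simp only [Finset.mem_filter, Finset.mem_univ, true_and] at hk1 hk2
    by_contra hne
    have := congrFun h k1
    rw [Function.update_self, Function.update_of_ne hne] at this
    exact hij (hk1.symm.trans this.symm)
  · intro b' hb'
    simp only [Finset.mem_filter, Finset.mem_univ, true_and] at hb'
    obtain ⟨k, h1, h2, h3⟩ := hb'
    refine ⟨k, by simp [h1], ?_⟩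
    funext l
    by_cases hl : l = k
    · subst hl; rw [Function.update_self, h2]
    · rw [Function.update_of_ne hl, (h3 l hl).symm]
  · intro k hk; rfl

lemma key1 {n p : ℕ} {i j : Fin p} (hij : i ≠ j) (a b : Fin n → Fin p) (z : ℂ) :
    (∑ a' : Fin n → Fin p,
      if ∃ k, a' k = i ∧ a k = j ∧ ∀ l, l ≠ k → a' l = a l then
        (MvPolynomial.monomial (expOf p (Dmat a' b))) z else 0)
      = ∑ s : Fin p,
          (MvPolynomial.monomial
            (Finsupp.single (i, s) 1 + (expOf p (Dmat a b) - Finsupp.single (j, s) 1)))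
            (z * (Dmat a b j s : ℂ)) := by
  rw [sum_update_left hij a (fun a' => (MvPolynomial.monomial (expOf p (Dmat a' b))) z)]
  rw [Finset.sum_congr rfl (fun k hk => by
    rw [expOf_update_left hij a b k (by simpa using hk)])]
  rw [← Finset.sum_fiberwise (Finset.univ.filter fun k => a k = j) b
    (fun k => (MvPolynomial.monomial
      (Finsupp.single (i, b k) 1 + (expOf p (Dmat a b) - Finsupp.single (j, b k) 1))) z)]
  refine Finset.sum_congr rfl fun s _ => ?_
  rw [Finset.sum_congr rfl (fun k hk => by
    have hbk : b k = s := (Finset.mem_filter.mp hk).2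
    rw [hbk])]
  rw [Finset.sum_const, Finset.filter_filter]
  have hcard : (Finset.univ.filter fun k => a k = j ∧ b k = s).card = Dmat a b j s := rfl
  rw [hcard, ← map_nsmul]
  congr 1
  push_cast
  ring

lemma key2 {n p : ℕ} {i j : Fin p} (hij : i ≠ j) (a b : Fin n → Fin p) (z : ℂ) :
    (∑ b' : Fin n → Fin p,
      if ∃ k, b k = i ∧ b' k = j ∧ ∀ l, l ≠ k → b l = b' l then
        (MvPolynomial.monomial (expOf p (Dmat a b'))) z else 0)
      = ∑ s : Fin p,
          (MvPolynomial.monomial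
            (Finsupp.single (s, j) 1 + (expOf p (Dmat a b) - Finsupp.single (s, i) 1)))
            (z * (Dmat a b s i : ℂ)) := by
  rw [sum_update_right hij b (fun b' => (MvPolynomial.monomial (expOf p (Dmat a b'))) z)]
  rw [Finset.sum_congr rfl (fun k hk => by
    rw [expOf_update_right hij a b k (by simpa using hk)])]
  rw [← Finset.sum_fiberwise (Finset.univ.filter fun k => b k = i) a
    (fun k => (MvPolynomial.monomial
      (Finsupp.single (a k, j) 1 + (expOf p (Dmat a b) - Finsupp.single (a k, i) 1))) z)]
  refine Finset.sum_congr rfl fun s _ => ?_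
  rw [Finset.sum_congr rfl (fun k hk => by
    have hak : a k = s := (Finset.mem_filter.mp hk).2
    rw [hak])]
  rw [Finset.sum_const, Finset.filter_filter]
  have hcard : (Finset.univ.filter fun k => b k = i ∧ a k = s).card = Dmat a b s i := by
    simp only [Dmat, Matrix.of_apply]
    congr 1
    apply Finset.filter_congr
    intro k _
    exact and_comm
  rw [hcard, ← map_nsmul]
  congr 1
  push_cast
  ring

end Aux

set_option maxHeartbeats 1000000 in
/-- for `i ≠ j` and any matrix `A`,
`f_{A_{i→j}·A} = d_{i→j}(f_A)` and `f_{A·A_{i→j}} = d*_{i→j}(f_A)`. -/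
theorem stmt_10 (n p : ℕ) (hn : 1 ≤ n) (hp : 1 ≤ p) (i j : Fin p) (hij : i ≠ j)
    (A : Matrix (Fin n → Fin p) (Fin n → Fin p) ℂ) :
    fPoly n p (Aarrow n p i j * A) = dOp p i j (fPoly n p A) ∧
    fPoly n p (A * Aarrow n p i j) = dStarOp p i j (fPoly n p A) := by
  constructor
  · have e1 : fPoly n p (Aarrow n p i j * A)
        = ∑ c : Fin n → Fin p, ∑ b : Fin n → Fin p, ∑ a : Fin n → Fin p,
            (if ∃ k, a k = i ∧ c k = j ∧ ∀ l, l ≠ k → a l = c l then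
              (MvPolynomial.monomial (expOf p (Dmat a b))) ((starRingEnd ℂ) (A c b)) else 0) := by
      rw [fPoly_eq]
      have h1 : ∀ a b : Fin n → Fin p,
          (MvPolynomial.monomial (expOf p (Dmat a b)))
              ((starRingEnd ℂ) ((Aarrow n p i j * A) a b))
            = ∑ c : Fin n → Fin p,
              (if ∃ k, a k = i ∧ c k = j ∧ ∀ l, l ≠ k → a l = c l then
                (MvPolynomial.monomial (expOf p (Dmat a b))) ((starRingEnd ℂ) (A c b)) else 0) := by
        intro a b
        rw [Matrix.mul_apply, map_sum, map_sum]
        refine Finset.sum_congr rfl fun c _ => ?_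
        simp only [Aarrow, Matrix.of_apply, ite_mul, one_mul, zero_mul,
          apply_ite (starRingEnd ℂ), map_zero,
          apply_ite (MvPolynomial.monomial (expOf p (Dmat a b)))]
      calc (∑ a : Fin n → Fin p, ∑ b : Fin n → Fin p,
              (MvPolynomial.monomial (expOf p (Dmat a b)))
                ((starRingEnd ℂ) ((Aarrow n p i j * A) a b)))
          = ∑ a : Fin n → Fin p, ∑ b : Fin n → Fin p, ∑ c : Fin n → Fin p,
              (if ∃ k, a k = i ∧ c k = j ∧ ∀ l, l ≠ k → a l = c l then
                (MvPolynomial.monomial (expOf p (Dmat a b))) ((starRingEnd ℂ) (A c b)) else 0) :=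
            Finset.sum_congr rfl fun a _ => Finset.sum_congr rfl fun b _ => h1 a b
        _ = ∑ a : Fin n → Fin p, ∑ c : Fin n → Fin p, ∑ b : Fin n → Fin p,
              (if ∃ k, a k = i ∧ c k = j ∧ ∀ l, l ≠ k → a l = c l then
                (MvPolynomial.monomial (expOf p (Dmat a b))) ((starRingEnd ℂ) (A c b)) else 0) :=
            Finset.sum_congr rfl fun a _ => Finset.sum_comm
        _ = ∑ c : Fin n → Fin p, ∑ a : Fin n → Fin p, ∑ b : Fin n → Fin p, _ :=
            Finset.sum_comm
        _ = ∑ c : Fin n → Fin p, ∑ b : Fin n → Fin p, ∑ a : Fin n → Fin p,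
              (if ∃ k, a k = i ∧ c k = j ∧ ∀ l, l ≠ k → a l = c l then
                (MvPolynomial.monomial (expOf p (Dmat a b))) ((starRingEnd ℂ) (A c b)) else 0) :=
            Finset.sum_congr rfl fun c _ => Finset.sum_comm
    have e3 : dOp p i j (fPoly n p A)
        = ∑ c : Fin n → Fin p, ∑ b : Fin n → Fin p, ∑ s : Fin p,
            (MvPolynomial.monomial
              (Finsupp.single (i, s) 1 + (expOf p (Dmat c b) - Finsupp.single (j, s) 1)))
              ((starRingEnd ℂ) (A c b) * ((expOf p (Dmat c b)) (j, s) : ℂ)) := by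
      rw [fPoly_eq]
      unfold dOp
      simp only [map_sum, MvPolynomial.pderiv_monomial, Finset.mul_sum]
      have hx : ∀ (s : Fin p) (e : (Fin p × Fin p) →₀ ℕ) (z : ℂ),
          MvPolynomial.X (i, s) * (MvPolynomial.monomial e) z
            = (MvPolynomial.monomial (Finsupp.single (i, s) 1 + e)) z := by
        intro s e z
        rw [show (MvPolynomial.X (i, s) : MvPolynomial (Fin p × Fin p) ℂ)
          = (MvPolynomial.monomial (Finsupp.single (i, s) 1)) 1 from rfl,
          MvPolynomial.monomial_mul, one_mul]
      simp only [hx]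
      rw [Finset.sum_comm]
      exact Finset.sum_congr rfl fun c _ => Finset.sum_comm
    rw [e1, e3]
    refine Finset.sum_congr rfl fun c _ => Finset.sum_congr rfl fun b _ => ?_
    rw [key1 hij c b ((starRingEnd ℂ) (A c b))]
    refine Finset.sum_congr rfl fun s _ => ?_
    rw [expOf_apply]
  · have e1 : fPoly n p (A * Aarrow n p i j)
        = ∑ a : Fin n → Fin p, ∑ c : Fin n → Fin p, ∑ b : Fin n → Fin p,
            (if ∃ k, c k = i ∧ b k = j ∧ ∀ l, l ≠ k → c l = b l then
              (MvPolynomial.monomial (expOf p (Dmat a b))) ((starRingEnd ℂ) (A a c)) else 0) := by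
      rw [fPoly_eq]
      have h1 : ∀ a b : Fin n → Fin p,
          (MvPolynomial.monomial (expOf p (Dmat a b)))
              ((starRingEnd ℂ) ((A * Aarrow n p i j) a b))
            = ∑ c : Fin n → Fin p,
              (if ∃ k, c k = i ∧ b k = j ∧ ∀ l, l ≠ k → c l = b l then
                (MvPolynomial.monomial (expOf p (Dmat a b))) ((starRingEnd ℂ) (A a c)) else 0) := by
        intro a b
        rw [Matrix.mul_apply, map_sum, map_sum]
        refine Finset.sum_congr rfl fun c _ => ?_
        simp only [Aarrow, Matrix.of_apply, mul_ite, mul_one, mul_zero,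
          apply_ite (starRingEnd ℂ), map_zero,
          apply_ite (MvPolynomial.monomial (expOf p (Dmat a b)))]
      calc (∑ a : Fin n → Fin p, ∑ b : Fin n → Fin p,
              (MvPolynomial.monomial (expOf p (Dmat a b)))
                ((starRingEnd ℂ) ((A * Aarrow n p i j) a b)))
          = ∑ a : Fin n → Fin p, ∑ b : Fin n → Fin p, ∑ c : Fin n → Fin p,
              (if ∃ k, c k = i ∧ b k = j ∧ ∀ l, l ≠ k → c l = b l then
                (MvPolynomial.monomial (expOf p (Dmat a b))) ((starRingEnd ℂ) (A a c)) else 0) :=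
            Finset.sum_congr rfl fun a _ => Finset.sum_congr rfl fun b _ => h1 a b
        _ = ∑ a : Fin n → Fin p, ∑ c : Fin n → Fin p, ∑ b : Fin n → Fin p,
              (if ∃ k, c k = i ∧ b k = j ∧ ∀ l, l ≠ k → c l = b l then
                (MvPolynomial.monomial (expOf p (Dmat a b))) ((starRingEnd ℂ) (A a c)) else 0) :=
            Finset.sum_congr rfl fun a _ => Finset.sum_comm
    have e3 : dStarOp p i j (fPoly n p A)
        = ∑ a : Fin n → Fin p, ∑ c : Fin n → Fin p, ∑ s : Fin p,
            (MvPolynomial.monomial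
              (Finsupp.single (s, j) 1 + (expOf p (Dmat a c) - Finsupp.single (s, i) 1)))
              ((starRingEnd ℂ) (A a c) * ((expOf p (Dmat a c)) (s, i) : ℂ)) := by
      rw [fPoly_eq]
      unfold dStarOp
      simp only [map_sum, MvPolynomial.pderiv_monomial, Finset.mul_sum]
      have hx : ∀ (s : Fin p) (e : (Fin p × Fin p) →₀ ℕ) (z : ℂ),
          MvPolynomial.X (s, j) * (MvPolynomial.monomial e) z
            = (MvPolynomial.monomial (Finsupp.single (s, j) 1 + e)) z := by
        intro s e z
        rw [show (MvPolynomial.X (s, j) : MvPolynomial (Fin p × Fin p) ℂ)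
          = (MvPolynomial.monomial (Finsupp.single (s, j) 1)) 1 from rfl,
          MvPolynomial.monomial_mul, one_mul]
      simp only [hx]
      rw [Finset.sum_comm]
      exact Finset.sum_congr rfl fun a _ => Finset.sum_comm
    rw [e1, e3]
    refine Finset.sum_congr rfl fun a _ => Finset.sum_congr rfl fun c _ => ?_
    rw [key2 hij a c ((starRingEnd ℂ) (A a c))]
    refine Finset.sum_congr rfl fun s _ => ?_
    rw [expOf_apply]
end
end

section
/- Let V be an m-dimensional complex vector space with bases u_1,…,u_m and v_1,…,v_m related by v_i = Σ_{j=1}^{m} c_{j,i} u_j. For ν ∈ ℕ^m with Σ_i ν_i = n, set v_ν := Σ_{a ∈ [m]^n, w(a)=ν} v_{a_1}⊗⋯⊗v_{a_n} ∈ V^{⊗n}, and define u_μ analogously. Then for every such ν: v_ν = Σ_{μ ∈ ℕ^m, Σμ=n} u_μ · c(μ,ν), where c(μ,ν) is the coefficient of the monomial x^ν := x_1^{ν_1}⋯x_m^{ν_m} in the polynomial ∏_{j=1}^{m} (x_1 c_{j,1} + x_2 c_{j,2} + ⋯ + x_m c_{j,m})^{μ_j}. -/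
open scoped Classical
open Finset MvPolynomial

noncomputable section

/-- The symmetrized basis tensor `w_ν = Σ_{a ∈ [m]^n, w(a) = ν} w_{a_1} ⊗ ⋯ ⊗ w_{a_n}`
attached to a family `w : Fin m → V` and a decomposition `ν` of `n`. -/
noncomputable def symTensor (m n : ℕ) {V : Type*} [AddCommGroup V] [Module ℂ V]
    (w : Fin m → V) (ν : Fin m → ℕ) : PiTensorProduct ℂ (fun _ : Fin n => V) :=
  ∑ a ∈ (Finset.univ : Finset (Fin n → Fin m)).filter
      (fun a => ∀ s, (Finset.univ.filter fun i => a i = s).card = ν s),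
    PiTensorProduct.tprod ℂ (fun i => w (a i))


lemma aux_monomial {m : ℕ} {n : ℕ} (a : Fin n → Fin m) (k : Fin n → ℂ) :
    (∏ i : Fin n, X (a i) * C (k i) : MvPolynomial (Fin m) ℂ)
      = monomial (∑ i, Finsupp.single (a i) 1) (∏ i, k i) := by
  induction n with
  | zero => simp [monomial_eq]
  | succ n ih =>
    rw [Fin.prod_univ_succ, Fin.prod_univ_succ, Fin.sum_univ_succ, ih (fun i => a i.succ)]
    rw [X, C_apply, monomial_mul, monomial_mul]
    simp [add_comm, mul_comm]

lemma aux_wgt_apply {m n : ℕ} (a : Fin n → Fin m) (s : Fin m) :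
    (∑ i, Finsupp.single (a i) 1) s = (univ.filter fun i => a i = s).card := by
  rw [Finset.sum_apply', Finset.card_filter]
  refine Finset.sum_congr rfl fun i _ => ?_
  rw [Finsupp.single_apply]

lemma aux_coeff {m n : ℕ} (c : Fin m → Fin m → ℂ) (b : Fin n → Fin m) (ν : Fin m → ℕ) :
    MvPolynomial.coeff (Finsupp.equivFunOnFinite.symm ν)
      (∏ i : Fin n, ∑ s : Fin m, X s * C (c (b i) s)) =
    ∑ a ∈ (univ : Finset (Fin n → Fin m)).filter
        (fun a => ∀ s, (univ.filter fun i => a i = s).card = ν s),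
      ∏ i, c (b i) (a i) := by
  rw [Finset.prod_univ_sum]
  rw [MvPolynomial.coeff_sum]
  rw [Finset.sum_filter]
  rw [show (Fintype.piFinset fun _ : Fin n => (univ : Finset (Fin m))) = univ by ext; simp]
  refine Finset.sum_congr rfl fun a _ => ?_
  rw [aux_monomial, MvPolynomial.coeff_monomial]
  have h : ((∑ i, Finsupp.single (a i) 1 : Fin m →₀ ℕ) = Finsupp.equivFunOnFinite.symm ν)
      ↔ ∀ s, (univ.filter fun i => a i = s).card = ν s := by
    rw [Finsupp.ext_iff]
    refine forall_congr' fun s => ?_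
    rw [aux_wgt_apply]
    simp [Finsupp.equivFunOnFinite]
  by_cases hh : ∀ s, (univ.filter fun i => a i = s).card = ν s <;> simp [hh, h]

lemma aux_prodcomp {m n : ℕ} {M : Type*} [CommMonoid M] (f : Fin m → M) (b : Fin n → Fin m) :
    ∏ i : Fin n, f (b i) = ∏ j : Fin m, f j ^ (univ.filter fun i => b i = j).card := by
  rw [Finset.prod_comp f b]
  apply Finset.prod_subset (Finset.subset_univ _)
  intro j _ hj
  have : (univ.filter fun i : Fin n => b i = j).card = 0 := by
    rw [Finset.card_eq_zero, Finset.filter_eq_empty_iff]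
    exact fun i _ h => hj (Finset.mem_image.mpr ⟨i, Finset.mem_univ _, h⟩)
  rw [this, pow_zero]


theorem stmt_12' (m n : ℕ) {V : Type*} [AddCommGroup V] [Module ℂ V]
    (u v : Module.Basis (Fin m) ℂ V) (c : Fin m → Fin m → ℂ)
    (hc : ∀ i, v i = ∑ j, c j i • u j)
    (ν : Fin m → ℕ) (hν : ∑ i, ν i = n) :
    (∑ a ∈ (Finset.univ : Finset (Fin n → Fin m)).filter
      (fun a => ∀ s, (Finset.univ.filter fun i => a i = s).card = ν s),
      PiTensorProduct.tprod ℂ (fun i => v (a i))) =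
      ∑ μ ∈ (Finset.univ : Finset (Fin m → Fin (n + 1))).filter
          (fun μ => ∑ i, (μ i : ℕ) = n),
        MvPolynomial.coeff (Finsupp.equivFunOnFinite.symm ν)
            (∏ j : Fin m, (∑ i : Fin m, MvPolynomial.X i * MvPolynomial.C (c j i)) ^ (μ j : ℕ)) •
          ∑ a ∈ (Finset.univ : Finset (Fin n → Fin m)).filter
            (fun a => ∀ s, (Finset.univ.filter fun i => a i = s).card = (μ s : ℕ)),
          PiTensorProduct.tprod ℂ (fun i => u (a i)) := by
  classical
  -- the weight map
  have hcard : ∀ (b : Fin n → Fin m) (s : Fin m),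
      (univ.filter fun i => b i = s).card < n + 1 := fun b s =>
    Nat.lt_succ_of_le (le_trans (Finset.card_filter_le _ _) (by simp))
  set g : (Fin n → Fin m) → (Fin m → Fin (n + 1)) :=
    fun b s => ⟨(univ.filter fun i => b i = s).card, hcard b s⟩ with hg
  have hgsum : ∀ b : Fin n → Fin m, ∑ s, ((g b s : ℕ)) = n := by
    intro b
    rw [hg]
    exact (Finset.card_eq_sum_card_fiberwise (fun i _ => Finset.mem_univ (b i))).symm.trans
      (Finset.card_fin n)
  -- expand LHS
  have lhs_eq : (∑ a ∈ (Finset.univ : Finset (Fin n → Fin m)).filter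
      (fun a => ∀ s, (Finset.univ.filter fun i => a i = s).card = ν s),
      PiTensorProduct.tprod ℂ (fun i => v (a i))) =
      ∑ b : Fin n → Fin m,
        (∑ a ∈ (Finset.univ : Finset (Fin n → Fin m)).filter
          (fun a => ∀ s, (Finset.univ.filter fun i => a i = s).card = ν s),
          ∏ i, c (b i) (a i)) • PiTensorProduct.tprod ℂ (fun i => u (b i)) := by
    have expand : ∀ a : Fin n → Fin m,
        PiTensorProduct.tprod ℂ (fun i => v (a i)) =
        ∑ b : Fin n → Fin m, (∏ i, c (b i) (a i)) • PiTensorProduct.tprod ℂ (fun i => u (b i)) := by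
      intro a
      have : (fun i : Fin n => v (a i)) = fun i => ∑ j : Fin m, c j (a i) • u j := by
        funext i; rw [hc]
      rw [this, MultilinearMap.map_sum]
      exact Finset.sum_congr rfl fun b _ => MultilinearMap.map_smul_univ _ _ _
    rw [Finset.sum_congr rfl fun a _ => expand a, Finset.sum_comm]
    exact Finset.sum_congr rfl fun b _ => (Finset.sum_smul).symm
  rw [lhs_eq]
  -- regroup RHS by fibers of g
  rw [Finset.sum_congr rfl (fun μ hμ => Finset.smul_sum)]
  have rhs_eq : ∀ μ ∈ (Finset.univ : Finset (Fin m → Fin (n + 1))).filter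
      (fun μ => ∑ i, (μ i : ℕ) = n),
      (∑ a ∈ (Finset.univ : Finset (Fin n → Fin m)).filter
        (fun a => ∀ s, (Finset.univ.filter fun i => a i = s).card = (μ s : ℕ)),
        MvPolynomial.coeff (Finsupp.equivFunOnFinite.symm ν)
          (∏ j : Fin m, (∑ i : Fin m, MvPolynomial.X i * MvPolynomial.C (c j i)) ^ (μ j : ℕ)) •
          PiTensorProduct.tprod ℂ (fun i => u (a i))) =
      ∑ b ∈ (Finset.univ : Finset (Fin n → Fin m)).filter (fun b => g b = μ),
        MvPolynomial.coeff (Finsupp.equivFunOnFinite.symm ν)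
          (∏ j : Fin m, (∑ i : Fin m, MvPolynomial.X i * MvPolynomial.C (c j i)) ^ ((g b j : ℕ))) •
          PiTensorProduct.tprod ℂ (fun i => u (b i)) := by
    intro μ hμ
    refine Finset.sum_congr ?_ ?_
    · ext b
      simp only [Finset.mem_filter, Finset.mem_univ, true_and, hg, funext_iff, Fin.ext_iff]
    · intro b hb
      rw [(Finset.mem_filter.mp hb).2]
  rw [Finset.sum_congr rfl rhs_eq,
    Finset.sum_fiberwise_of_maps_to (g := g) (fun b _ => by simp [hgsum b])]
  refine Finset.sum_congr rfl fun b _ => ?_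
  congr 1
  have h1 : (∏ j : Fin m, (∑ i : Fin m, X i * C (c j i)) ^ ((g b j : ℕ)) : MvPolynomial (Fin m) ℂ)
      = ∏ i : Fin n, ∑ s : Fin m, X s * C (c (b i) s) :=
    (aux_prodcomp (fun j => ∑ i : Fin m, X i * C (c j i)) b).symm
  rw [h1, aux_coeff c b ν]


/-- if `v_i = Σ_j c_{j,i} u_j` relates two bases of `V`, then for every
decomposition `ν` of `n`, `v_ν = Σ_μ u_μ · c(μ,ν)`, where `c(μ,ν)` is the coefficient of
`x^ν` in `∏_j (x_1 c_{j,1} + ⋯ + x_m c_{j,m})^{μ_j}` (decompositions `μ` of `n` are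
encoded with entries in `Fin (n+1)`). -/
theorem stmt_12 (m n : ℕ) {V : Type*} [AddCommGroup V] [Module ℂ V]
    (u v : Module.Basis (Fin m) ℂ V) (c : Fin m → Fin m → ℂ)
    (hc : ∀ i, v i = ∑ j, c j i • u j)
    (ν : Fin m → ℕ) (hν : ∑ i, ν i = n) :
    symTensor m n v ν =
      ∑ μ ∈ (Finset.univ : Finset (Fin m → Fin (n + 1))).filter
          (fun μ => ∑ i, (μ i : ℕ) = n),
        MvPolynomial.coeff (Finsupp.equivFunOnFinite.symm ν)
            (∏ j : Fin m, (∑ i : Fin m, MvPolynomial.X i * MvPolynomial.C (c j i)) ^ (μ j : ℕ)) •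
          symTensor m n u (fun i => (μ i : ℕ)) := by
  unfold symTensor
  exact stmt_12' m n u v c hc ν hν
end
end
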